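/- arXiv:1004.3618 — 10 statements merged into one kernel-verified Lean document; each statement's English description precedes it below -/
import Mathlib

section
/- Let R = k[t, t⁻¹] be the Laurent polynomial ring over a commutative Noetherian ring k, with augmentation ideal ω = (1-t)R, and let S = {1 - r : r ∈ ω}. A finitely generated R-module M is S-torsion-free (i.e., sx ≠ 0 for all s ∈ S and nonzero x ∈ M) if and only if ⋂_{n≥1} ω^n M = 0. -/
open LaurentPolynomial

theorem torsionfree_iff_inter_eq_bot (k : Type*) [CommRing k] [IsNoetherianRing k]
    (M : Type*) [AddCommGroup M] [Module (LaurentPolynomial k) M]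
    [Module.Finite (LaurentPolynomial k) M]
    (ω : Ideal (LaurentPolynomial k)) (hω : ω = Ideal.span {1 - T 1}) :
    (∀ r ∈ ω, ∀ x : M, x ≠ 0 → (1 - r) • x ≠ 0) ↔
      (⨅ (n : ℕ) (_ : 1 ≤ n), (ω ^ n • ⊤ : Submodule (LaurentPolynomial k) M)) = ⊥ := by
  set R := LaurentPolynomial k
  haveI : IsLocalization (Submonoid.powers (Polynomial.X : Polynomial k)) R :=
    LaurentPolynomial.isLocalization
  haveI hnoeth : IsNoetherianRing R :=
    IsLocalization.isNoetherianRing (Submonoid.powers (Polynomial.X : Polynomial k))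
      R inferInstance
  -- transport the Krull intersection lemma across universes via a finite presentation
  obtain ⟨n, π, hπ⟩ := Module.Finite.exists_fin' R M
  let M₀ := (Fin n → R) ⧸ LinearMap.ker π
  haveI : Module.Finite R M₀ :=
    Module.Finite.of_surjective (LinearMap.ker π).mkQ (Submodule.Quotient.mk_surjective _)
  let e : M₀ ≃ₗ[R] M := π.quotKerEquivOfSurjective hπ
  have hmapsm : ∀ m : ℕ, (ω ^ m • ⊤ : Submodule R M)
      = Submodule.map (e : M₀ →ₗ[R] M) (ω ^ m • ⊤ : Submodule R M₀) := by
    intro m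
    rw [Submodule.map_smul'', Submodule.map_top, LinearEquiv.range e]
  have key2 : ∀ x : M, x ∈ (⨅ m : ℕ, (ω ^ m • ⊤ : Submodule R M)) ↔
      ∃ r : ω, (r : R) • x = x := by
    intro x
    have h1 : x ∈ (⨅ m : ℕ, (ω ^ m • ⊤ : Submodule R M)) ↔
        e.symm x ∈ (⨅ m : ℕ, (ω ^ m • ⊤ : Submodule R M₀)) := by
      simp only [Submodule.mem_iInf]
      refine forall_congr' fun m => ?_
      rw [hmapsm m]
      constructor
      · rintro ⟨y, hy, hyx⟩
        simpa [← hyx] using hy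
      · intro hy
        exact ⟨e.symm x, hy, by simp⟩
    rw [h1, Ideal.mem_iInf_smul_pow_eq_bot_iff]
    constructor
    · rintro ⟨r, hr⟩
      refine ⟨r, ?_⟩
      have := congrArg e hr
      simpa using this
    · rintro ⟨r, hr⟩
      refine ⟨r, ?_⟩
      apply e.injective
      simpa using hr
  have key : (⨅ (m : ℕ) (_ : 1 ≤ m), (ω ^ m • ⊤ : Submodule R M))
      = ⨅ (m : ℕ), (ω ^ m • ⊤ : Submodule R M) := by
    apply le_antisymm
    · refine le_iInf fun m => ?_
      rcases Nat.eq_zero_or_pos m with rfl | hm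
      · simp
      · exact iInf_le_of_le m (iInf_le _ hm)
    · exact le_iInf fun m => le_iInf fun _ => iInf_le _ m
  rw [key]
  constructor
  · intro h
    rw [eq_bot_iff]
    intro x hx
    obtain ⟨⟨r, hr⟩, hrx⟩ := (key2 x).mp hx
    by_contra hx0
    exact h r hr x hx0 (by rw [sub_smul, one_smul, hrx, sub_self])
  · intro h r hr x hx0 hrx
    apply hx0
    have hx : x ∈ (⨅ m : ℕ, (ω ^ m • ⊤ : Submodule R M)) := by
      refine (key2 x).mpr ⟨⟨r, hr⟩, ?_⟩
      rw [sub_smul, one_smul, sub_eq_zero] at hrx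
      exact hrx.symm
    rw [h] at hx
    exact hx
end

section
/- Let H be a subnormal subgroup of finite index in a group G, and let K be any subgroup of G. Then the index [K : H ∩ K] divides [G : H]. -/
/-- `H` is a subnormal subgroup of `G`: there is a finite chain of subgroups from `H` to `G`,
each normal in the next. -/
def Subgroup.IsSubnormal' {G : Type*} [Group G] (H : Subgroup G) : Prop :=
  ∃ n : ℕ, ∃ c : ℕ → Subgroup G, c 0 = H ∧ c n = ⊤ ∧
    ∀ i < n, c i ≤ c (i + 1) ∧ ((c i).subgroupOf (c (i + 1))).Normal

private theorem aux_subnormal {G : Type*} [Group G] :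
    ∀ n (H K : Subgroup G) (c : ℕ → Subgroup G), c 0 = H → c n = ⊤ →
      (∀ i < n, c i ≤ c (i + 1) ∧ ((c i).subgroupOf (c (i + 1))).Normal) →
      H.relIndex K ∣ H.index := by
  intro n
  induction n with
  | zero =>
    intro H K c h0 htop _
    rw [← h0, htop]
    simp
  | succ n ih =>
    intro H K c h0 htop hchain
    set H₁ := c 1 with hH1
    have hIH : H₁.relIndex K ∣ H₁.index :=
      ih H₁ K (fun i => c (i + 1)) rfl htop (fun i hi => hchain (i + 1) (by omega))
    obtain ⟨hle, hnorm⟩ := hchain 0 (Nat.succ_pos n)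
    rw [h0] at hle hnorm
    -- H ≤ H₁, H.subgroupOf H₁ normal
    have h1 : H.relIndex (H₁ ⊓ K) * H₁.relIndex K = H.relIndex K := by
      have := Subgroup.relIndex_inf_mul_relIndex H H₁ K
      rwa [inf_of_le_left hle] at this
    have h2 : H.relIndex H₁ * H₁.index = H.index := Subgroup.relIndex_mul_index hle
    have h3 : H.relIndex (H₁ ⊓ K) ∣ H.relIndex H₁ := by
      have := @Subgroup.relIndex_dvd_index_of_normal H₁ _ (H.subgroupOf H₁)
        ((H₁ ⊓ K).subgroupOf H₁) hnorm
      rwa [Subgroup.relIndex_subgroupOf inf_le_left] at this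
    calc H.relIndex K = H.relIndex (H₁ ⊓ K) * H₁.relIndex K := h1.symm
      _ ∣ H.relIndex H₁ * H₁.index := mul_dvd_mul h3 hIH
      _ = H.index := h2

theorem relindex_dvd_index_of_subnormal (G : Type*) [Group G] (H K : Subgroup G)
    (hsub : H.IsSubnormal') (hfin : H.FiniteIndex) :
    H.relIndex K ∣ H.index := by
  obtain ⟨n, c, h0, htop, hchain⟩ := hsub
  exact aux_subnormal n H K c h0 htop hchain
end

section
/- If G₁, …, G_m are subnormal subgroups of finite index in a group G, then [G : G₁ ∩ ⋯ ∩ G_m] divides [G : G₁] ⋯ [G : G_m]. -/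
private theorem relindex_dvd_relindex_of_normal' {G : Type*} [Group G]
    {H K L : Subgroup G} (hHK : H ≤ K) (hLK : L ≤ K)
    (hnorm : (H.subgroupOf K).Normal) : H.relIndex L ∣ H.relIndex K := by
  haveI := hnorm
  have := Subgroup.relIndex_dvd_index_of_normal (H := H.subgroupOf K) (K := L.subgroupOf K)
  rwa [Subgroup.relIndex_subgroupOf hLK] at this

private theorem aux_chain {G : Type*} [Group G] :
    ∀ (n : ℕ) (c : ℕ → Subgroup G), c n = ⊤ →
      (∀ i < n, c i ≤ c (i + 1) ∧ ((c i).subgroupOf (c (i + 1))).Normal) →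
      ∀ K : Subgroup G, (c 0).relIndex K ∣ (c 0).index := by
  intro n
  induction n with
  | zero =>
    intro c h0 _ K
    rw [h0, Subgroup.relIndex_top_left]
    exact one_dvd _
  | succ n ih =>
    intro c hn hc K
    have ih1 := ih (fun i => c (i + 1)) hn
      (fun i hi => hc (i + 1) (by omega)) K
    obtain ⟨hle, hnorm⟩ := hc 0 (Nat.succ_pos n)
    have key : (c 0).relIndex K = (c 0).relIndex (c 1 ⊓ K) * (c 1).relIndex K := by
      calc (c 0).relIndex K
          = (c 0 ⊓ K).relIndex (c 1 ⊓ K) * (c 1 ⊓ K).relIndex K := by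
            rw [Subgroup.relIndex_mul_relIndex _ _ _ (inf_le_inf_right K hle) inf_le_right,
              Subgroup.inf_relIndex_right]
        _ = (c 0).relIndex (c 1 ⊓ K) * (c 1).relIndex K := by
            rw [Subgroup.inf_relIndex_right]
            congr 1
            rw [← Subgroup.inf_relIndex_right (c 0) (c 1 ⊓ K)]
            congr 1
            rw [← inf_assoc, inf_eq_left.mpr hle]
    have d1 : (c 0).relIndex (c 1 ⊓ K) ∣ (c 0).relIndex (c 1) :=
      relindex_dvd_relindex_of_normal' hle inf_le_left hnorm
    have d2 : (c 1).relIndex K ∣ (c 1).index := ih1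
    calc (c 0).relIndex K ∣ (c 0).relIndex (c 1) * (c 1).index := by
          rw [key]; exact mul_dvd_mul d1 d2
      _ = (c 0).index := Subgroup.relIndex_mul_index hle

private theorem relindex_dvd_index_of_isSubnormal {G : Type*} [Group G]
    {H : Subgroup G} (h : H.IsSubnormal') (K : Subgroup G) :
    H.relIndex K ∣ H.index := by
  obtain ⟨n, c, h0, hn, hc⟩ := h
  have := aux_chain n c hn hc K
  rwa [h0] at this

theorem index_inf_dvd_prod_index (G : Type*) [Group G] (m : ℕ)
    (Gs : Fin m → Subgroup G) (hsub : ∀ i, (Gs i).IsSubnormal')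
    (hfin : ∀ i, (Gs i).FiniteIndex) :
    (⨅ i, Gs i).index ∣ ∏ i, (Gs i).index := by
  induction m with
  | zero => simp
  | succ n ih =>
    have hsplit : (⨅ i, Gs i) = Gs 0 ⊓ ⨅ i : Fin n, Gs i.succ := by
      apply le_antisymm
      · exact le_inf (iInf_le _ 0) (le_iInf fun i => iInf_le _ i.succ)
      · apply le_iInf; intro i
        induction i using Fin.cases with
        | zero => exact inf_le_left
        | succ j => exact inf_le_right.trans (iInf_le _ j)
    rw [Fin.prod_univ_succ, hsplit]
    set K := ⨅ i : Fin n, Gs i.succ with hK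
    have h1 : (Gs 0 ⊓ K).index = (Gs 0).relIndex K * K.index := by
      rw [← Subgroup.inf_relIndex_right (Gs 0) K,
        Subgroup.relIndex_mul_index inf_le_right]
    rw [h1]
    exact mul_dvd_mul (relindex_dvd_index_of_isSubnormal (hsub 0) K)
      (ih (fun i => Gs i.succ) (fun i => hsub i.succ) (fun i => hfin i.succ))
end

section
/- Let H be a subnormal subgroup of finite index in a group G. Then the index of the core H_G = ⋂_{g∈G} g⁻¹Hg in G divides [G:H]^{[G:N_G(H)]}. In particular, if [G:H] is a power of a prime p, then [G:H_G] is also a power of p. -/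
open Subgroup in
theorem relIndex_dvd_of_chain {G : Type*} [Group G] :
    ∀ (n : ℕ) (c : ℕ → Subgroup G), c n = ⊤ →
    (∀ i < n, c i ≤ c (i + 1) ∧ ((c i).subgroupOf (c (i + 1))).Normal) →
    ∀ B : Subgroup G, (c 0).relIndex B ∣ (c 0).index := by
  intro n
  induction n with
  | zero => intro c htop _ B; rw [htop, relIndex_top_left]; exact one_dvd _
  | succ n ih =>
    intro c htop hchain B
    set A := c 0 with hA
    set M := c 1 with hM
    obtain ⟨hAM, hnorm⟩ := hchain 0 (Nat.succ_pos n)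
    have ihM : ∀ B : Subgroup G, M.relIndex B ∣ M.index := by
      intro B
      exact ih (fun i => c (i + 1)) htop (fun i hi => hchain (i + 1) (by omega)) B
    have key : A.relIndex (M ⊓ B) * M.relIndex B = A.relIndex B := by
      rw [relIndex_inf_mul_relIndex, inf_eq_left.mpr hAM]
    have h1 : A.relIndex (M ⊓ B) ∣ A.relIndex M := by
      have := relIndex_subgroupOf (H := A) (K := M ⊓ B) (L := M) inf_le_left
      rw [← this]
      exact @relIndex_dvd_index_of_normal _ _ (A.subgroupOf M) _ hnorm
    have h2 : M.relIndex B ∣ M.index := ihM B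
    calc A.relIndex B = A.relIndex (M ⊓ B) * M.relIndex B := key.symm
      _ ∣ A.relIndex M * M.index := mul_dvd_mul h1 h2
      _ = A.index := relIndex_mul_index hAM

open Subgroup in
theorem index_iInf_dvd {G : Type*} [Group G] {ι : Type*} [Fintype ι]
    (f : ι → Subgroup G) (d : ℕ) (hf : ∀ i (B : Subgroup G), (f i).relIndex B ∣ d) :
    (⨅ i, f i).index ∣ d ^ Fintype.card ι := by
  classical
  have key : ∀ s : Finset ι, (⨅ i ∈ s, f i).index ∣ d ^ s.card := by
    intro s
    induction s using Finset.induction with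
    | empty => simp
    | @insert a s ha ih =>
      rw [Finset.card_insert_of_notMem ha, Finset.iInf_insert]
      set R := ⨅ i ∈ s, f i with hR
      have hle : f a ⊓ R ≤ R := inf_le_right
      have heq : (f a ⊓ R).index = (f a ⊓ R).relIndex R * R.index := (relIndex_mul_index hle).symm
      rw [heq, inf_relIndex_right, pow_succ']
      exact mul_dvd_mul (hf a R) ih
  have := key Finset.univ
  simpa [Finset.card_univ] using this

theorem conj_comap_normalizer_eq {G : Type*} [Group G] (H : Subgroup G) {n : G} (g : G)
    (hn : n ∈ Subgroup.normalizer (H : Set G)) :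
    Subgroup.comap (MulAut.conj (n * g)).toMonoidHom H
      = Subgroup.comap (MulAut.conj g).toMonoidHom H := by
  rw [Subgroup.mem_normalizer_iff] at hn
  ext x
  simp only [Subgroup.mem_comap, MulEquiv.coe_toMonoidHom, MulAut.conj_apply]
  have : n * g * x * (n * g)⁻¹ = n * (g * x * g⁻¹) * n⁻¹ := by group
  rw [this, ← hn (g * x * g⁻¹)]

open Subgroup in
theorem core_index_dvd (G : Type*) [Group G] (H : Subgroup G)
    (hsub : H.IsSubnormal') (hfin : H.FiniteIndex) :
    (⨅ g : G, Subgroup.comap (MulAut.conj g).toMonoidHom H).index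
        ∣ H.index ^ (Subgroup.normalizer (H : Set G)).index ∧
      ∀ p k : ℕ, p.Prime → H.index = p ^ k →
        ∃ l : ℕ, (⨅ g : G, Subgroup.comap (MulAut.conj g).toMonoidHom H).index = p ^ l := by
  classical
  obtain ⟨m, c, hc0, hctop, hchain⟩ := hsub
  have hrel : ∀ B : Subgroup G, H.relIndex B ∣ H.index := by
    rw [← hc0]; exact relIndex_dvd_of_chain m c hctop hchain
  have hconjrel : ∀ (g : G) (B : Subgroup G),
      (Subgroup.comap (MulAut.conj g).toMonoidHom H).relIndex B ∣ H.index := by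
    intro g B
    rw [relIndex_comap]
    exact hrel _
  set N := Subgroup.normalizer (H : Set G) with hN
  haveI : N.FiniteIndex := finiteIndex_of_le le_normalizer
  haveI : Finite (G ⧸ N) := finite_quotient_of_finiteIndex (H := N)
  haveI : Fintype (G ⧸ N) := Fintype.ofFinite _
  set f : G ⧸ N → Subgroup G :=
    fun q => Subgroup.comap (MulAut.conj (Quotient.out q)⁻¹).toMonoidHom H with hf
  have hKeq : (⨅ g : G, Subgroup.comap (MulAut.conj g).toMonoidHom H) = ⨅ q, f q := by
    apply le_antisymm
    · exact le_iInf fun q => iInf_le _ _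
    · apply le_iInf
      intro g
      have hout : ∃ h : N, Quotient.out (QuotientGroup.mk g⁻¹ : G ⧸ N) = g⁻¹ * h :=
        QuotientGroup.mk_out_eq_mul N g⁻¹
      obtain ⟨⟨n, hn⟩, hq⟩ := hout
      have : f (QuotientGroup.mk g⁻¹) = Subgroup.comap (MulAut.conj g).toMonoidHom H := by
        rw [hf]
        simp only [hq, mul_inv_rev, inv_inv]
        exact conj_comap_normalizer_eq H g ((inv_mem hn))
      exact this ▸ iInf_le f (QuotientGroup.mk g⁻¹)
  rw [hKeq]
  have hdvd : (⨅ q, f q).index ∣ H.index ^ Fintype.card (G ⧸ N) :=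
    index_iInf_dvd f H.index (fun q B => hconjrel _ B)
  have hcard : Fintype.card (G ⧸ N) = N.index := by
    rw [Subgroup.index, Nat.card_eq_fintype_card]
  rw [hcard] at hdvd
  refine ⟨hdvd, ?_⟩
  intro p k hp hHk
  have : (⨅ q, f q).index ∣ p ^ (k * N.index) := by
    rw [pow_mul, ← hHk]; exact hdvd
  obtain ⟨l, -, hl⟩ := (Nat.dvd_prime_pow hp).mp this
  exact ⟨l, hl⟩
end

section
/- Let φ be an automorphism of ℤ^d and G = ℤ ⋉_φ ℤ^d. Then G is residually p for every prime p if and only if φ is unipotent. -/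
/-- The action of `ℤ` on `ℤ^d` where `1` acts by `φ`. -/
def sdAct (d : ℕ) (φ : (Fin d → ℤ) ≃ₗ[ℤ] (Fin d → ℤ)) :
    Multiplicative ℤ →* MulAut (Multiplicative (Fin d → ℤ)) :=
  zpowersHom _ (AddEquiv.toMultiplicative φ.toAddEquiv)

/-- The mapping torus `ℤ ⋉_φ ℤ^d`. -/
abbrev MapTorus (d : ℕ) (φ : (Fin d → ℤ) ≃ₗ[ℤ] (Fin d → ℤ)) :=
  Multiplicative (Fin d → ℤ) ⋊[sdAct d φ] Multiplicative ℤ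

/-- A group is residually `p` if every nontrivial element is detected by a homomorphism
to a finite `p`-group. -/
def ResiduallyP (p : ℕ) (G : Type*) [Group G] : Prop :=
  ∀ g : G, g ≠ 1 → ∃ (P : Type) (_ : Group P) (_ : Finite P) (f : G →* P),
    IsPGroup p P ∧ f g ≠ 1


lemma aut_pow_comm {M N : Type*} [Monoid M] [Monoid N] (f : M →* N)
    (e : MulAut M) (e2 : MulAut N) (h : ∀ x, f (e x) = e2 (f x)) :
    ∀ (j : ℤ) (x : M), f ((e ^ j) x) = (e2 ^ j) (f x) := by
  have hinv : ∀ x, f (e⁻¹ x) = e2⁻¹ (f x) := by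
    intro x
    have h2 := h (e⁻¹ x)
    rw [MulAut.apply_inv_self] at h2
    rw [h2, ← MulAut.mul_apply, inv_mul_cancel, MulAut.one_apply]
  intro j
  induction j using Int.induction_on with
  | zero => simp
  | succ i ih =>
    intro x
    rw [show ((i : ℤ) + 1) = (i + 1 : ℤ) from rfl, zpow_add_one, MulAut.mul_apply,
      ih, h, ← MulAut.mul_apply, ← zpow_add_one]
  | pred i ih =>
    intro x
    rw [sub_eq_add_neg, zpow_add, zpow_neg_one, MulAut.mul_apply, ih, hinv,
      ← MulAut.mul_apply, ← zpow_neg_one, ← zpow_add, ← sub_eq_add_neg]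

def sdpEquivProd {N G : Type*} [Group N] [Group G] (φ : G →* MulAut N) :
    (N ⋊[φ] G) ≃ N × G where
  toFun x := (x.left, x.right)
  invFun y := ⟨y.1, y.2⟩
  left_inv x := rfl
  right_inv y := rfl

lemma choose_pdvd {p : ℕ} (hp : p.Prime) {k d n : ℕ} (hk0 : k ≠ 0) (hkd : k < d) :
    p ^ n ∣ (p ^ (n + d)).choose k := by
  have hkm : k ≤ p ^ (n + d) :=
    le_of_lt (lt_of_lt_of_le hkd (le_trans (Nat.le_add_left d n) (le_of_lt (Nat.lt_pow_self hp.one_lt))))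
  apply pow_dvd_of_le_emultiplicity
  rw [Nat.Prime.emultiplicity_choose_prime_pow hp hkm hk0]
  have hmk : multiplicity p k < k := by
    have h1 : p ^ multiplicity p k ∣ k := pow_multiplicity_dvd p k
    have h2 : p ^ multiplicity p k ≤ k := Nat.le_of_dvd (Nat.pos_of_ne_zero hk0) h1
    exact lt_of_lt_of_le (Nat.lt_pow_self hp.one_lt) h2
  exact Nat.cast_le.mpr (by omega)


lemma alg_key {d : ℕ} (M : (Fin d → ℤ) →ₗ[ℤ] (Fin d → ℤ)) (hM : M ^ d ≠ 0) :
    ∃ (a : ℤ) (v : Fin d → ℤ), a ≠ 0 ∧ v ≠ 0 ∧ ∀ c : ℕ, ∃ u, (M ^ c) u = a ^ c • v := by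
  classical
  set c := LinearMap.charpoly M with hcdef
  have hc0 : c ≠ 0 := (LinearMap.charpoly_monic M).ne_zero
  set k := c.natTrailingDegree with hk
  set a := c.coeff k with hadef
  have ha : a ≠ 0 := Polynomial.coeff_natTrailingDegree_ne_zero.mpr hc0
  have hkd : k ≤ d := by
    have h1 : c.natDegree = d := by
      rw [hcdef, LinearMap.charpoly_natDegree, Module.finrank_fin_fun]
    rw [hk, ← h1]
    exact Polynomial.natTrailingDegree_le_natDegree c
  obtain ⟨q, hq⟩ : Polynomial.X ^ k ∣ c := by
    rw [Polynomial.X_pow_dvd_iff]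
    intro e he
    exact Polynomial.coeff_eq_zero_of_lt_natTrailingDegree he
  have hq0 : q.coeff 0 = a := by
    have h2 := Polynomial.coeff_X_pow_mul q k 0
    rw [← hq, zero_add] at h2
    exact h2.symm
  set S := Polynomial.aeval M q.divX with hS
  set T := -S with hT
  have hqsplit : q = Polynomial.X * q.divX + Polynomial.C a := by
    rw [← hq0]; exact (Polynomial.X_mul_divX_add q).symm
  have h0 : Polynomial.aeval M c = 0 := LinearMap.aeval_self_charpoly M
  have h1 : M ^ k * (M * S) + a • M ^ k = 0 := by
    rw [hq, hqsplit] at h0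
    simp only [map_mul, map_add, Polynomial.aeval_X_pow, Polynomial.aeval_X,
      Polynomial.aeval_C] at h0
    have halg : a • M ^ k = M ^ k * (algebraMap ℤ ((Fin d → ℤ) →ₗ[ℤ] Fin d → ℤ) a) := by
      rw [Algebra.smul_def, Algebra.commutes]
    rw [halg, ← mul_add, h0]
  have key1 : a • M ^ d = M ^ d * (M * T) := by
    have hdk : M ^ (d - k) * (M ^ k * (M * S)) + a • (M ^ (d - k) * M ^ k) = 0 := by
      rw [← mul_smul_comm, ← mul_add, h1, mul_zero]
    rw [← mul_assoc, ← pow_add, Nat.sub_add_cancel hkd] at hdk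
    have h5 : a • M ^ d = -(M ^ d * (M * S)) := eq_neg_of_add_eq_zero_right hdk
    rw [h5, hT, mul_neg, mul_neg]
  have hcomm : Commute M T := by
    have h3 : Commute (Polynomial.aeval M Polynomial.X) (Polynomial.aeval M q.divX) :=
      (Commute.all Polynomial.X q.divX).map (Polynomial.aeval M)
    rw [Polynomial.aeval_X] at h3
    exact (h3).neg_right
  have key2 : ∀ n : ℕ, a ^ n • M ^ d = M ^ d * (M * T) ^ n := by
    intro n
    induction n with
    | zero => simp
    | succ n ih =>
      rw [pow_succ, mul_smul, key1, ← smul_mul_assoc, ih, mul_assoc, ← pow_succ]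
  obtain ⟨w, hw⟩ : ∃ w, (M ^ d) w ≠ 0 := by
    by_contra h
    push_neg at h
    exact hM (LinearMap.ext (by simpa using h))
  refine ⟨a, (M ^ d) w, ha, hw, fun n => ⟨(M ^ d * T ^ n) w, ?_⟩⟩
  have h4 : M ^ n * (M ^ d * T ^ n) = M ^ d * (M * T) ^ n := by
    rw [hcomm.mul_pow, ← mul_assoc, ← mul_assoc, ← pow_add, ← pow_add, Nat.add_comm]
  calc (M ^ n) ((M ^ d * T ^ n) w) = (M ^ n * (M ^ d * T ^ n)) w := rfl
    _ = (M ^ d * (M * T) ^ n) w := by rw [h4]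
    _ = (a ^ n • M ^ d) w := by rw [key2]
    _ = a ^ n • (M ^ d) w := rfl

lemma sdAct_one_apply {d : ℕ} (φ : (Fin d → ℤ) ≃ₗ[ℤ] (Fin d → ℤ)) (w : Fin d → ℤ) :
    (sdAct d φ (Multiplicative.ofAdd (1:ℤ))) (Multiplicative.ofAdd w)
      = Multiplicative.ofAdd (φ w) := by
  simp [sdAct, zpowersHom_apply]

open scoped commutatorElement in
lemma lcs_mem {d : ℕ} (φ : (Fin d → ℤ) ≃ₗ[ℤ] (Fin d → ℤ)) {P : Type} [Group P]
    (f : MapTorus d φ →* P) :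
    ∀ (c : ℕ) (u : Fin d → ℤ),
      f (SemidirectProduct.inl (Multiplicative.ofAdd (((φ.toLinearMap - 1) ^ c) u)))
        ∈ (⊤ : Subgroup P).lowerCentralSeries c := by
  intro c
  induction c with
  | zero => intro u; exact Subgroup.mem_top _
  | succ c ih =>
    intro u
    set M := φ.toLinearMap - 1 with hM
    set w := (M ^ c) u with hw
    have hMw : (M ^ (c+1)) u = φ w - w := by
      rw [pow_succ']
      show M ((M ^ c) u) = _
      rw [hM]
      simp [LinearMap.sub_apply]
      rfl
    have hid : (SemidirectProduct.inl (Multiplicative.ofAdd ((M ^ (c+1)) u)) : MapTorus d φ)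
        = ⁅(SemidirectProduct.inr (Multiplicative.ofAdd (1:ℤ)) : MapTorus d φ),
           SemidirectProduct.inl (Multiplicative.ofAdd w)⁆ := by
      have hinv : (SemidirectProduct.inr (Multiplicative.ofAdd (1:ℤ)) : MapTorus d φ)⁻¹
          = SemidirectProduct.inr ((Multiplicative.ofAdd (1:ℤ))⁻¹) := (map_inv _ _).symm
      rw [commutatorElement_def, hinv, ← SemidirectProduct.inl_aut, sdAct_one_apply,
        ← map_inv, ← map_mul]
      rw [hMw]
      rfl
    rw [hid, map_commutatorElement]
    rw [lowerCentralSeries_succ]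
    have hmem := Subgroup.commutator_mem_commutator (ih u)
      (Subgroup.mem_top (f (SemidirectProduct.inr (Multiplicative.ofAdd (1:ℤ)))))
    rw [show ⁅f (SemidirectProduct.inr (Multiplicative.ofAdd (1:ℤ))),
        f (SemidirectProduct.inl (Multiplicative.ofAdd w))⁆
      = ⁅f (SemidirectProduct.inl (Multiplicative.ofAdd w)),
        f (SemidirectProduct.inr (Multiplicative.ofAdd (1:ℤ)))⁆⁻¹ from
      (commutatorElement_inv _ _).symm]
    exact Subgroup.inv_mem _ hmem

lemma forward {d : ℕ} (φ : (Fin d → ℤ) ≃ₗ[ℤ] (Fin d → ℤ))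
    (hres : ∀ p : ℕ, p.Prime → ResiduallyP p (MapTorus d φ)) :
    (φ.toLinearMap - 1) ^ d = 0 := by
  by_contra hM
  obtain ⟨a, v, ha, hv, hMain⟩ := alg_key _ hM
  obtain ⟨p, hpa, hp⟩ := Nat.exists_infinite_primes (a.natAbs + 1)
  have hne : (SemidirectProduct.inl (Multiplicative.ofAdd v) : MapTorus d φ) ≠ 1 := by
    intro h
    rw [show (1 : MapTorus d φ) = SemidirectProduct.inl (1 : Multiplicative (Fin d → ℤ)) from
      (map_one SemidirectProduct.inl).symm] at h
    exact hv (by simpa using SemidirectProduct.inl_injective h)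
  obtain ⟨P, _, _, f, hP, hf⟩ := hres p hp _ hne
  have hfact : Fact p.Prime := ⟨hp⟩
  have hfin := Fintype.ofFinite P
  obtain ⟨c, hc⟩ := nilpotent_iff_lowerCentralSeries.mp hP.isNilpotent
  obtain ⟨u, hu⟩ := hMain c
  have h1 : f (SemidirectProduct.inl (Multiplicative.ofAdd (((φ.toLinearMap - 1) ^ c) u))) = 1 := by
    have h2 := lcs_mem φ f c u
    rw [hc] at h2
    simpa using h2
  rw [hu] at h1
  set x := f (SemidirectProduct.inl (Multiplicative.ofAdd v)) with hx
  have h2 : x ^ (a ^ c) = 1 := by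
    rw [hx, ← map_zpow, ← map_zpow, ← ofAdd_zsmul]
    exact h1
  have hdvd1 : orderOf x ∣ a.natAbs ^ c := by
    have h3 := orderOf_dvd_iff_zpow_eq_one.mpr h2
    have h4 := Int.natAbs_dvd_natAbs.mpr h3
    simpa [Int.natAbs_pow] using h4
  obtain ⟨e, he⟩ := hP x
  have hdvd2 : orderOf x ∣ p ^ e := orderOf_dvd_of_pow_eq_one he
  have hcop : Nat.Coprime (p ^ e) (a.natAbs ^ c) := by
    apply Nat.Coprime.pow
    rw [Nat.Prime.coprime_iff_not_dvd hp]
    intro hdvd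
    have := Nat.le_of_dvd (Int.natAbs_pos.mpr ha) hdvd
    omega
  have h5 : orderOf x ∣ 1 := hcop ▸ Nat.dvd_gcd hdvd2 hdvd1
  exact hf (orderOf_eq_one_iff.mp (Nat.dvd_one.mp h5))

lemma pow_eq_one_of_unipotent {R : Type*} [Ring R] {x : R} {d : ℕ} (hx : (x - 1) ^ d = 0)
    {p n : ℕ} (hp : p.Prime) (hchar : ∀ C : ℕ, p ^ n ∣ C → (C : R) = 0) :
    x ^ (p ^ (n + d)) = 1 := by
  have hx1 : x = (x - 1) + 1 := by rw [sub_add_cancel]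
  rw [hx1, (Commute.one_right (x - 1)).add_pow]
  rw [Finset.sum_eq_single 0]
  · simp
  · intro k _ hk0
    rcases lt_or_ge k d with h | h
    · rw [hchar _ (choose_pdvd hp hk0 h), mul_zero]
    · have hz : (x - 1) ^ k = 0 := by
        have h2 : (x - 1) ^ k = (x - 1) ^ d * (x - 1) ^ (k - d) := by
          rw [← pow_add, Nat.add_sub_cancel' h]
        rw [h2, hx, zero_mul]
      rw [hz, zero_mul, zero_mul]
  · intro h0
    exact absurd (Finset.mem_range.mpr (Nat.succ_pos _)) h0

section MatAut

variable {d q : ℕ} (Aq Bq : Matrix (Fin d) (Fin d) (ZMod q))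

def matAut (h1 : Aq * Bq = 1) (h2 : Bq * Aq = 1) :
    MulAut (Multiplicative (Fin d → ZMod q)) :=
  AddEquiv.toMultiplicative
    { toFun := fun x => Aq.mulVec x
      invFun := fun x => Bq.mulVec x
      left_inv := fun x => by
        show Bq.mulVec (Aq.mulVec x) = x
        rw [Matrix.mulVec_mulVec, h2, Matrix.one_mulVec]
      right_inv := fun x => by
        show Aq.mulVec (Bq.mulVec x) = x
        rw [Matrix.mulVec_mulVec, h1, Matrix.one_mulVec]
      map_add' := fun x y => Matrix.mulVec_add Aq x y }

variable {Aq Bq} (h1 : Aq * Bq = 1) (h2 : Bq * Aq = 1)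

lemma matAut_apply (x : Multiplicative (Fin d → ZMod q)) :
    matAut Aq Bq h1 h2 x = Multiplicative.ofAdd (Aq.mulVec x.toAdd) := rfl

lemma matAut_pow (j : ℕ) : ∀ (x : Multiplicative (Fin d → ZMod q)),
    (matAut Aq Bq h1 h2 ^ j) x = Multiplicative.ofAdd ((Aq ^ j).mulVec x.toAdd) := by
  induction j with
  | zero =>
    intro x
    rw [pow_zero, pow_zero, Matrix.one_mulVec]
    rfl
  | succ j ih =>
    intro x
    rw [pow_succ, MulAut.mul_apply, matAut_apply, ih, toAdd_ofAdd,
      Matrix.mulVec_mulVec, ← pow_succ]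

lemma matAut_pow_eq_one {r : ℕ} (hord : Aq ^ r = 1) : matAut Aq Bq h1 h2 ^ r = 1 := by
  apply MulEquiv.ext
  intro x
  rw [matAut_pow h1 h2, hord, Matrix.one_mulVec]
  rfl

def sdActQ (r : ℕ) (hord : Aq ^ r = 1) :
    Multiplicative (ZMod r) →* MulAut (Multiplicative (Fin d → ZMod q)) :=
  AddMonoidHom.toMultiplicativeLeft
    (ZMod.lift r ⟨zmultiplesHom _ (Additive.ofMul (matAut Aq Bq h1 h2)), by
      rw [zmultiplesHom_apply, ← ofMul_zpow, zpow_natCast, matAut_pow_eq_one h1 h2 hord]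
      rfl⟩)

lemma sdActQ_apply {r : ℕ} (hord : Aq ^ r = 1) (j : ℤ) :
    sdActQ h1 h2 r hord (Multiplicative.ofAdd ((j : ZMod r))) = matAut Aq Bq h1 h2 ^ j := by
  unfold sdActQ
  rw [AddMonoidHom.toMultiplicativeLeft_apply_apply, toAdd_ofAdd, ZMod.lift_coe,
    zmultiplesHom_apply, toMul_zsmul]
  rfl

end MatAut

lemma backward {d : ℕ} (φ : (Fin d → ℤ) ≃ₗ[ℤ] (Fin d → ℤ))
    (hN : (φ.toLinearMap - 1) ^ d = 0) (p : ℕ) (hp : p.Prime) :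
    ResiduallyP p (MapTorus d φ) := by
  classical
  intro g hg
  set v : Fin d → ℤ := g.left.toAdd with hv
  set kk : ℤ := g.right.toAdd with hkk
  set B : ℕ := max (Finset.univ.sup fun i => (v i).natAbs) kk.natAbs with hB
  set n : ℕ := B + 1 with hn
  set m : ℕ := n + d with hm
  set q : ℕ := p ^ n with hqdef
  set r : ℕ := p ^ m with hrdef
  have hBq : B < q := by
    have := Nat.lt_pow_self (n := n) hp.one_lt
    omega
  have hqr : q ≤ r := Nat.pow_le_pow_right hp.pos (by omega)
  have hBr : B < r := lt_of_lt_of_le hBq hqr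
  haveI : NeZero q := ⟨pow_ne_zero n hp.pos.ne'⟩
  haveI : NeZero r := ⟨pow_ne_zero m hp.pos.ne'⟩
  -- matrices
  have hco1 : φ.toLinearMap * φ.symm.toLinearMap = 1 := by
    apply LinearMap.ext; intro x; simp [Module.End.mul_apply]
  have hco2 : φ.symm.toLinearMap * φ.toLinearMap = 1 := by
    apply LinearMap.ext; intro x; simp [Module.End.mul_apply]
  set E := (LinearMap.toMatrixAlgEquiv' :
    ((Fin d → ℤ) →ₗ[ℤ] (Fin d → ℤ)) ≃ₐ[ℤ] Matrix (Fin d) (Fin d) ℤ) with hE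
  set A : Matrix (Fin d) (Fin d) ℤ := E φ.toLinearMap with hA
  set A' : Matrix (Fin d) (Fin d) ℤ := E φ.symm.toLinearMap with hA'
  have hAB : A * A' = 1 := by rw [hA, hA', ← map_mul, hco1, map_one]
  have hBA : A' * A = 1 := by rw [hA, hA', ← map_mul, hco2, map_one]
  have hnilA : (A - 1) ^ d = 0 := by rw [hA, ← map_one E, ← map_sub, ← map_pow, hN, map_zero]
  have hmulA : ∀ w : Fin d → ℤ, A.mulVec w = φ w := by
    intro w
    have h3 : Matrix.toLin' (LinearMap.toMatrix' φ.toLinearMap) = φ.toLinearMap :=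
      Matrix.toLin'_toMatrix' _
    calc A.mulVec w = Matrix.toLin' A w := (Matrix.toLin'_apply _ _).symm
      _ = φ w := by rw [show A = LinearMap.toMatrix' φ.toLinearMap from rfl, h3]; rfl
  -- reduction mod q
  set ρq := Int.castRingHom (ZMod q) with hρq
  set Aq := ρq.mapMatrix A with hAq
  set Bq := ρq.mapMatrix A' with hBq'
  have hqAB : Aq * Bq = 1 := by rw [hAq, hBq', ← map_mul, hAB, map_one]
  have hqBA : Bq * Aq = 1 := by rw [hAq, hBq', ← map_mul, hBA, map_one]
  have hqNil : (Aq - 1) ^ d = 0 := by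
    rw [hAq, ← map_one ρq.mapMatrix, ← map_sub, ← map_pow, hnilA, map_zero]
  have hchar : ∀ C : ℕ, p ^ n ∣ C → ((C : Matrix (Fin d) (Fin d) (ZMod q))) = 0 := by
    intro C hC
    have h4 : ((C : ZMod q)) = 0 := (ZMod.natCast_eq_zero_iff C q).mpr (hqdef ▸ hC)
    calc (C : Matrix (Fin d) (Fin d) (ZMod q))
        = Matrix.scalar (Fin d) ((C : ZMod q)) := (map_natCast (Matrix.scalar (Fin d)) C).symm
      _ = 0 := by rw [h4, map_zero]
  have hord : Aq ^ r = 1 := by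
    rw [hrdef, hm]; exact pow_eq_one_of_unipotent hqNil hp hchar
  set ψ := sdActQ hqAB hqBA r hord with hψ
  -- the reduction homomorphisms
  set πadd : (Fin d → ℤ) →+ (Fin d → ZMod q) :=
    { toFun := fun w i => ((w i : ℤ) : ZMod q)
      map_zero' := by funext i; simp
      map_add' := fun a b => by funext i; exact Int.cast_add _ _ } with hπadd
  set π := AddMonoidHom.toMultiplicative πadd with hπ
  set ρ := AddMonoidHom.toMultiplicative (Int.castAddHom (ZMod r)) with hρ
  have hbase : ∀ x, π ((AddEquiv.toMultiplicative φ.toAddEquiv) x)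
      = (matAut Aq Bq hqAB hqBA) (π x) := by
    intro x
    show Multiplicative.ofAdd (πadd (φ.toAddEquiv x.toAdd))
      = Multiplicative.ofAdd (Aq.mulVec (πadd x.toAdd))
    congr 1
    funext i
    calc πadd (φ.toAddEquiv x.toAdd) i = ρq ((A.mulVec x.toAdd) i) := by
          rw [hmulA]; rfl
      _ = (A.map ρq).mulVec (ρq ∘ x.toAdd) i := RingHom.map_mulVec ρq A x.toAdd i
      _ = Aq.mulVec (πadd x.toAdd) i := rfl
  have hcompat : ∀ gz : Multiplicative ℤ,
      π.comp ((sdAct d φ gz).toMonoidHom) = ((ψ (ρ gz)).toMonoidHom).comp π := by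
    intro gz
    refine MonoidHom.ext fun x => ?_
    show π ((sdAct d φ gz) x) = (ψ (ρ gz)) (π x)
    have h5 : sdAct d φ gz = (AddEquiv.toMultiplicative φ.toAddEquiv) ^ gz.toAdd := rfl
    have h6 : ρ gz = Multiplicative.ofAdd ((gz.toAdd : ZMod r)) := rfl
    rw [h5, h6, hψ, sdActQ_apply]
    exact aut_pow_comm π _ _ hbase gz.toAdd x
  set F := SemidirectProduct.map π ρ hcompat with hF
  set Q := Multiplicative (Fin d → ZMod q) ⋊[ψ] Multiplicative (ZMod r) with hQ
  haveI : Finite Q := Finite.of_equiv _ (sdpEquivProd ψ).symm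
  have hcard : Nat.card Q = p ^ (n * d + m) := by
    rw [Nat.card_congr (sdpEquivProd ψ), Nat.card_prod,
      Nat.card_congr (Multiplicative.toAdd), Nat.card_congr (Multiplicative.toAdd),
      Nat.card_pi, Nat.card_zmod, Nat.card_zmod]
    simp only [Finset.prod_const, Finset.card_univ, Fintype.card_fin]
    rw [hqdef, hrdef, ← pow_mul, ← pow_add]
  -- nontriviality of the image
  have hfg : F g ≠ 1 := by
    by_cases hvz : v = 0
    · have hk0 : kk ≠ 0 := by
        intro h0
        apply hg
        ext : 1
        · show g.left.toAdd = _
          rw [← hv, hvz]; rfl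
        · show g.right.toAdd = _
          rw [← hkk, h0]; rfl
      intro h1
      have h2 := congrArg SemidirectProduct.right h1
      rw [SemidirectProduct.map_right] at h2
      have h3 : ((kk : ZMod r)) = 0 := by
        have : ρ g.right = 1 := by rw [h2]; rfl
        exact congrArg Multiplicative.toAdd this
      have h4 : (r : ℤ) ∣ kk := (ZMod.intCast_zmod_eq_zero_iff_dvd kk r).mp h3
      have h5 : r ∣ kk.natAbs := by
        have := Int.natAbs_dvd_natAbs.mpr h4
        simpa using this
      have h6 : r ≤ kk.natAbs := Nat.le_of_dvd (Int.natAbs_pos.mpr hk0) h5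
      have h7 : kk.natAbs ≤ B := by rw [hB]; exact le_max_right _ _
      omega
    · obtain ⟨i, hi⟩ := Function.ne_iff.mp hvz
      intro h1
      have h2 := congrArg SemidirectProduct.left h1
      rw [SemidirectProduct.map_left] at h2
      have h3 : πadd v = 0 := by
        have : π g.left = 1 := by rw [h2]; rfl
        exact congrArg Multiplicative.toAdd this
      have h4 : ((v i : ℤ) : ZMod q) = 0 := congrFun h3 i
      have h5 : (q : ℤ) ∣ v i := (ZMod.intCast_zmod_eq_zero_iff_dvd (v i) q).mp h4
      have h6 : q ∣ (v i).natAbs := by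
        have := Int.natAbs_dvd_natAbs.mpr h5
        simpa using this
      have h7 : q ≤ (v i).natAbs := Nat.le_of_dvd (Int.natAbs_pos.mpr hi) h6
      have h8 : (v i).natAbs ≤ B := by
        rw [hB]; exact le_trans (Finset.le_sup (f := fun i => (v i).natAbs) (Finset.mem_univ i)) (le_max_left _ _)
      omega
  exact ⟨Q, inferInstance, inferInstance, F, IsPGroup.of_card hcard, hfg⟩

theorem residually_p_forall_iff_unipotent (d : ℕ) (φ : (Fin d → ℤ) ≃ₗ[ℤ] (Fin d → ℤ)) :
    (∀ p : ℕ, p.Prime → ResiduallyP p (MapTorus d φ)) ↔ (φ.toLinearMap - 1) ^ d = 0 := by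
  constructor
  · exact fun h => forward φ h
  · exact fun hN p hp => backward φ hN p hp
end

section
/- Let φ be an automorphism of ℤ^d and G = ℤ ⋉_φ ℤ^d. Then G has a finite-index subgroup which is nilpotent if and only if φ is quasi-unipotent, i.e., φ^k is unipotent for some k > 0. -/
namespace VNQU

variable {d : ℕ} (φ : (Fin d → ℤ) ≃ₗ[ℤ] (Fin d → ℤ))

/-- Bundling a linear equiv into a `MulAut` of the `Multiplicative` group, as a hom. -/
def F : ((Fin d → ℤ) ≃ₗ[ℤ] (Fin d → ℤ)) →* MulAut (Multiplicative (Fin d → ℤ)) where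
  toFun e := AddEquiv.toMultiplicative e.toAddEquiv
  map_one' := rfl
  map_mul' _ _ := rfl

lemma sdAct_eq (g : Multiplicative ℤ) : sdAct d φ g = F (φ ^ g.toAdd) :=
  (map_zpow F φ g.toAdd).symm

lemma sdAct_apply (g : Multiplicative ℤ) (v : Fin d → ℤ) :
    (sdAct d φ g) (Multiplicative.ofAdd v) = Multiplicative.ofAdd ((φ ^ g.toAdd) v) := by
  rw [sdAct_eq]; rfl

/-- `ℤ^d`-part elements. -/
def ii (v : Fin d → ℤ) : MapTorus d φ := SemidirectProduct.inl (Multiplicative.ofAdd v)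

/-- `ℤ`-part elements. -/
def jj (n : ℤ) : MapTorus d φ := SemidirectProduct.inr (Multiplicative.ofAdd n)

lemma ii_add (v w : Fin d → ℤ) : ii φ (v + w) = ii φ v * ii φ w := by
  rw [ii, ii, ii, ofAdd_add, map_mul]

lemma ii_inv (v : Fin d → ℤ) : (ii φ v)⁻¹ = ii φ (-v) := by
  rw [ii, ii, ofAdd_neg, map_inv]

lemma jj_add (a b : ℤ) : jj φ (a + b) = jj φ a * jj φ b := by
  rw [jj, jj, jj, ofAdd_add, map_mul]

lemma jj_inv (a : ℤ) : (jj φ a)⁻¹ = jj φ (-a) := by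
  rw [jj, jj, ofAdd_neg, map_inv]

lemma ii_injective : Function.Injective (ii φ) := fun a b h => by
  have := SemidirectProduct.inl_injective h
  exact Multiplicative.ofAdd.injective this

end VNQU
namespace VNQU
variable {d : ℕ} (φ : (Fin d → ℤ) ≃ₗ[ℤ] (Fin d → ℤ))

lemma F_apply (e : (Fin d → ℤ) ≃ₗ[ℤ] (Fin d → ℤ)) (x : Multiplicative (Fin d → ℤ)) :
    (F e) x = Multiplicative.ofAdd (e (Multiplicative.toAdd x)) := rfl

lemma comm_right (x y : MapTorus d φ) : (x * y * x⁻¹ * y⁻¹).right = 1 := by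
  simp [mul_comm]

lemma comm1 (a : Fin d → ℤ) (y : MapTorus d φ) :
    x₀ = ii φ a → x₀ * y * x₀⁻¹ * y⁻¹ = ii φ (a - (φ ^ y.right.toAdd) a) := by
  rintro rfl
  ext
  · simp only [SemidirectProduct.mul_left, SemidirectProduct.inv_left, ii,
      SemidirectProduct.left_inl, SemidirectProduct.right_inl, SemidirectProduct.mul_right,
      SemidirectProduct.inv_right]
    simp only [sdAct_eq, F_apply, toAdd_mul, toAdd_inv, toAdd_one, toAdd_ofAdd,
      zero_add, add_zero, neg_zero, neg_neg, zpow_zero, map_neg]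
    refine congrFun ?_ _
    have h1 : ∀ x, (1 : (Fin d → ℤ) ≃ₗ[ℤ] (Fin d → ℤ)) x = x := fun _ => rfl
    have h2 : ∀ x, (φ ^ Multiplicative.toAdd y.right)
        ((φ ^ (-Multiplicative.toAdd y.right)) x) = x := by
      intro x
      rw [zpow_neg]
      exact (φ ^ Multiplicative.toAdd y.right).apply_symm_apply x
    rw [h1, h1, h2]
    abel
  · simp [ii, div_eq_mul_inv, mul_comm]

end VNQU

namespace VNQU
variable {d : ℕ} (φ : (Fin d → ℤ) ≃ₗ[ℤ] (Fin d → ℤ))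

lemma comm2 (n : ℤ) (v : Fin d → ℤ) :
    jj φ n * ii φ v * (jj φ n)⁻¹ * (ii φ v)⁻¹ = ii φ ((φ ^ n) v - v) := by
  ext
  · simp only [SemidirectProduct.mul_left, SemidirectProduct.inv_left, ii, jj,
      SemidirectProduct.left_inl, SemidirectProduct.right_inl, SemidirectProduct.mul_right,
      SemidirectProduct.inv_right, SemidirectProduct.left_inr, SemidirectProduct.right_inr]
    simp only [sdAct_eq, F_apply, toAdd_mul, toAdd_inv, toAdd_one, toAdd_ofAdd,
      zero_add, add_zero, neg_zero, neg_neg, zpow_zero, map_neg, map_one, mul_one, one_mul]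
    congr 1
    have h1 : ∀ x, (1 : (Fin d → ℤ) ≃ₗ[ℤ] (Fin d → ℤ)) x = x := fun _ => rfl
    have h2 : ∀ x, (φ ^ (n + -n)) x = x := by intro x; rw [add_neg_cancel, zpow_zero, h1]
    simp only [h1, h2, map_zero, MulAut.one_apply, toAdd_inv, toAdd_ofAdd, add_zero, zero_add]
    abel
  · simp [ii, jj, div_eq_mul_inv, mul_comm]
end VNQU

namespace VNQU

lemma form_mul {R : Type*} [Ring R] {N x y cx cy : R} (hx : x = 1 + N * cx)
    (hy : y = 1 + N * cy) (h1 : Commute cx N) (h2 : Commute cy N) :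
    x * y = 1 + N * (cx + cy + cx * N * cy) ∧ Commute (cx + cy + cx * N * cy) N := by
  constructor
  · subst hx hy; noncomm_ring
  · exact (h1.add_left h2).add_left ((h1.mul_left (Commute.refl N)).mul_left h2)

variable {d : ℕ} (φ : (Fin d → ℤ) ≃ₗ[ℤ] (Fin d → ℤ))

/-- The endomorphism attached to an automorphism. -/
noncomputable abbrev lin : ((Fin d → ℤ) ≃ₗ[ℤ] (Fin d → ℤ)) →* Module.End ℤ (Fin d → ℤ) :=
  LinearEquiv.automorphismGroup.toLinearMapMonoidHom

lemma zpow_form (m : ℤ) : ∃ c : Module.End ℤ (Fin d → ℤ),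
    lin (φ ^ m) = 1 + (lin φ - 1) * c ∧ Commute c (lin φ - 1) := by
  set N : Module.End ℤ (Fin d → ℤ) := lin φ - 1 with hN
  have hφ : lin φ = 1 + N * 1 := by rw [mul_one, hN]; noncomm_ring
  have hB : ∃ cB, lin φ⁻¹ = 1 + N * cB ∧ Commute cB N := by
    refine ⟨-(lin φ⁻¹), ?_, ?_⟩
    · have h4 : Commute (lin φ⁻¹) N := by
        have : Commute (lin φ⁻¹) (lin φ) := by
          unfold Commute SemiconjBy
          rw [← map_mul, ← map_mul, inv_mul_cancel, mul_inv_cancel]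
        exact this.sub_right (Commute.one_right _)
      have h5 : lin φ⁻¹ * lin φ = 1 := by rw [← map_mul, inv_mul_cancel, map_one]
      rw [hφ] at h5
      have : lin φ⁻¹ + lin φ⁻¹ * N = 1 := by rw [← h5]; noncomm_ring
      calc lin φ⁻¹ = 1 - lin φ⁻¹ * N := by rw [← this]; noncomm_ring
        _ = 1 - N * lin φ⁻¹ := by rw [h4.eq]
        _ = 1 + N * -(lin φ⁻¹) := by noncomm_ring
    · have : Commute (lin φ⁻¹) (lin φ) := by
        unfold Commute SemiconjBy
        rw [← map_mul, ← map_mul, inv_mul_cancel, mul_inv_cancel]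
      exact ((this.sub_right (Commute.one_right _))).neg_left
  induction m using Int.induction_on with
  | zero => exact ⟨0, by rw [zpow_zero, map_one, mul_zero, add_zero], Commute.zero_left _⟩
  | succ i ih =>
    obtain ⟨c, hc, hcc⟩ := ih
    refine ⟨c + 1 + c * N * 1, ?_, ?_⟩
    · rw [zpow_add_one, map_mul]
      exact (form_mul hc hφ hcc (Commute.one_left N)).1
    · exact (form_mul hc hφ hcc (Commute.one_left N)).2
  | pred i ih =>
    obtain ⟨c, hc, hcc⟩ := ih
    obtain ⟨cB, hcB, hccB⟩ := hB
    refine ⟨c + cB + c * N * cB, ?_, (form_mul hc hcB hcc hccB).2⟩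
    rw [zpow_sub_one, map_mul]
    exact (form_mul hc hcB hcc hccB).1

end VNQU

namespace VNQU
variable {d : ℕ} (ψ : (Fin d → ℤ) ≃ₗ[ℤ] (Fin d → ℤ))

/-- The subgroup of the mapping torus over a submodule of `ℤ^d`. -/
def K (W : Submodule ℤ (Fin d → ℤ)) : Subgroup (MapTorus d ψ) where
  carrier := {x | x.right = 1 ∧ x.left.toAdd ∈ W}
  one_mem' := ⟨rfl, W.zero_mem⟩
  mul_mem' := by
    rintro x y ⟨hx1, hx2⟩ ⟨hy1, hy2⟩
    refine ⟨?_, ?_⟩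
    · show (x * y).right = 1
      rw [SemidirectProduct.mul_right, hx1, hy1, mul_one]
    · show ((x * y).left).toAdd ∈ W
      rw [SemidirectProduct.mul_left, hx1, map_one, MulAut.one_apply, toAdd_mul]
      exact W.add_mem hx2 hy2
  inv_mem' := by
    rintro x ⟨hx1, hx2⟩
    refine ⟨?_, ?_⟩
    · show x⁻¹.right = 1
      rw [SemidirectProduct.inv_right, hx1, inv_one]
    · show (x⁻¹.left).toAdd ∈ W
      rw [SemidirectProduct.inv_left, hx1, inv_one, map_one, MulAut.one_apply, toAdd_inv]
      exact W.neg_mem hx2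

lemma mem_K {W : Submodule ℤ (Fin d → ℤ)} {x : MapTorus d ψ} :
    x ∈ K ψ W ↔ x.right = 1 ∧ x.left.toAdd ∈ W := Iff.rfl

lemma eq_ii_of_right_eq_one {x : MapTorus d ψ} (h : x.right = 1) :
    x = ii ψ x.left.toAdd := by
  ext
  · simp [ii]
  · simp [ii, h]

theorem nilpotent_of_unipotent (h : ((lin ψ : Module.End ℤ (Fin d → ℤ)) - 1) ^ d = 0) :
    Group.IsNilpotent (MapTorus d ψ) := by
  set N : Module.End ℤ (Fin d → ℤ) := lin ψ - 1 with hN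
  rw [nilpotent_iff_finite_descending_central_series]
  refine ⟨d + 1, fun i => match i with
    | 0 => ⊤
    | (i+1) => K ψ (LinearMap.range (N ^ i)), ⟨rfl, ?_⟩, ?_⟩
  · intro x n hx g
    match n with
    | 0 =>
      refine ⟨comm_right ψ x g, ?_⟩
      rw [pow_zero]
      exact ⟨_, rfl⟩
    | (i+1) =>
      obtain ⟨hx1, u, hu⟩ := hx
      rw [eq_ii_of_right_eq_one ψ hx1]
      set a := x.left.toAdd with ha
      rw [commutatorElement_def, comm1 ψ a g rfl, mem_K]
      refine ⟨rfl, ?_⟩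
      obtain ⟨c, hc, hcc⟩ := zpow_form ψ g.right.toAdd
      refine ⟨-(c u), ?_⟩
      have h1 : (ψ ^ g.right.toAdd) a = (lin (ψ ^ g.right.toAdd)) a := rfl
      have key : (N ^ (i + 1)) (c u) = (ψ ^ g.right.toAdd) a - a := by
        rw [h1, hc, ← hu]
        have : (N ^ (i+1)) * c = N * c * N ^ i := by
          rw [pow_succ', mul_assoc, ← (hcc.pow_right i).eq, ← mul_assoc]
        calc (N ^ (i + 1)) (c u) = ((N ^ (i+1)) * c) u := rfl
          _ = (N * c * N ^ i) u := by rw [this]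
          _ = (N * c) ((N ^ i) u) := rfl
          _ = (1 + N * c) ((N ^ i) u) - (N ^ i) u := by
              simp [LinearMap.add_apply]
      show (N ^ (i + 1)) (-(c u)) = a - (ψ ^ g.right.toAdd) a
      rw [map_neg, key]
      abel
  · rw [eq_bot_iff]
    rintro x ⟨hx1, hx2⟩
    rw [h] at hx2
    obtain ⟨u, hu⟩ := hx2
    have hx0 : x.left.toAdd = 0 := by rw [← hu]; rfl
    have hxl : x.left = 1 := by
      have := congrArg Multiplicative.ofAdd hx0
      simpa using this
    rw [Subgroup.mem_bot]
    exact SemidirectProduct.ext hxl hx1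

end VNQU

namespace VNQU
variable {d : ℕ} (φ : (Fin d → ℤ) ≃ₗ[ℤ] (Fin d → ℤ))

/-- multiplication by `k` on `Multiplicative ℤ`. -/
def powk (k : ℕ) : Multiplicative ℤ →* Multiplicative ℤ :=
  zpowersHom _ (Multiplicative.ofAdd (k : ℤ))

lemma toAdd_powk (k : ℕ) (g : Multiplicative ℤ) :
    (powk k g).toAdd = g.toAdd * (k : ℤ) := by
  rw [powk, zpowersHom_apply, toAdd_zpow, toAdd_ofAdd, smul_eq_mul]

lemma sdAct_pow (k : ℕ) (g : Multiplicative ℤ) :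
    sdAct d (φ ^ k) g = sdAct d φ (powk k g) := by
  rw [sdAct_eq, sdAct_eq, toAdd_powk, ← zpow_natCast φ k, ← zpow_mul, mul_comm]

/-- The embedding of the mapping torus of `φ^k` into that of `φ`. -/
def Φmap (k : ℕ) : MapTorus d (φ ^ k) →* MapTorus d φ :=
  SemidirectProduct.lift SemidirectProduct.inl
    (SemidirectProduct.inr.comp (powk k))
    (by
      intro g
      apply MonoidHom.ext
      intro n
      simp only [MonoidHom.comp_apply, MulEquiv.coe_toMonoidHom, MulAut.conj_apply]
      rw [sdAct_pow]
      rw [SemidirectProduct.inl_aut]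
      rw [map_inv])

lemma Φmap_apply (k : ℕ) (x : MapTorus d (φ ^ k)) :
    Φmap φ k x = ⟨x.left, powk k x.right⟩ := by
  show SemidirectProduct.inl x.left * SemidirectProduct.inr (powk k x.right) = _
  rw [← SemidirectProduct.mk_eq_inl_mul_inr]

lemma Φmap_injective {k : ℕ} (hk : 0 < k) : Function.Injective (Φmap φ k) := by
  intro x y hxy
  rw [Φmap_apply, Φmap_apply, SemidirectProduct.ext_iff] at hxy
  dsimp only at hxy
  obtain ⟨h1, h2⟩ := hxy
  have h3 : x.right.toAdd * (k : ℤ) = y.right.toAdd * (k : ℤ) := by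
    rw [← toAdd_powk, ← toAdd_powk, h2]
  have h4 : x.right = y.right := by
    have := mul_right_cancel₀ (by exact_mod_cast hk.ne' : (k : ℤ) ≠ 0) h3
    exact Multiplicative.toAdd.injective this
  exact SemidirectProduct.ext h1 h4

/-- The quotient map detecting the image of `Φmap`. -/
def qmap (k : ℕ) : MapTorus d φ →* Multiplicative (ZMod k) :=
  (AddMonoidHom.toMultiplicative (Int.castAddHom (ZMod k))).comp SemidirectProduct.rightHom

lemma range_eq_ker (k : ℕ) : (Φmap φ k).range = (qmap φ k).ker := by
  ext x
  constructor
  · rintro ⟨y, rfl⟩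
    rw [MonoidHom.mem_ker, qmap, MonoidHom.comp_apply]
    have : SemidirectProduct.rightHom (Φmap φ k y) = powk k y.right := by
      rw [Φmap_apply]; rfl
    rw [this]
    show Multiplicative.ofAdd ((((powk k y.right).toAdd : ℤ) : ZMod k)) = 1
    rw [toAdd_powk]
    push_cast
    rw [ZMod.natCast_self, mul_zero]
    rfl
  · intro hx
    rw [MonoidHom.mem_ker] at hx
    have h0 : ((x.right.toAdd : ℤ) : ZMod k) = 0 := by
      have : (qmap φ k x).toAdd = 0 := by rw [hx]; rfl
      exact this
    obtain ⟨m, hm⟩ := (ZMod.intCast_zmod_eq_zero_iff_dvd _ _).mp h0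
    refine ⟨⟨x.left, Multiplicative.ofAdd m⟩, ?_⟩
    rw [Φmap_apply]
    refine SemidirectProduct.ext rfl ?_
    apply Multiplicative.toAdd.injective
    rw [toAdd_powk, toAdd_ofAdd, hm]
    ring

theorem backward {k : ℕ} (hk : 0 < k) (h : (φ.toLinearMap ^ k - 1) ^ d = 0) :
    ∃ H : Subgroup (MapTorus d φ), H.FiniteIndex ∧ Group.IsNilpotent H := by
  haveI : NeZero k := ⟨hk.ne'⟩
  refine ⟨(Φmap φ k).range, ?_, ?_⟩
  · rw [range_eq_ker]
    infer_instance
  · haveI : Group.IsNilpotent (MapTorus d (φ ^ k)) := by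
      apply nilpotent_of_unipotent
      have : (lin (φ ^ k) : Module.End ℤ (Fin d → ℤ)) = φ.toLinearMap ^ k := by
        rw [map_pow]; rfl
      rw [this]
      exact h
    exact nilpotent_of_mulEquiv (MonoidHom.ofInjective (Φmap_injective φ hk))

end VNQU

namespace VNQU

open scoped commutatorElement

lemma exists_pow_mem {G : Type*} [Group G] (H : Subgroup G) [H.FiniteIndex] (g : G) :
    ∃ k : ℕ, 0 < k ∧ g ^ k ∈ H := by
  obtain ⟨m, n, hne, heq⟩ := Finite.exists_ne_map_eq_of_infinite
    (fun j : ℕ => ((g ^ j : G) : G ⧸ H))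
  have key : ∀ m n : ℕ, m < n → ((g ^ m : G) : G ⧸ H) = ((g ^ n : G) : G ⧸ H) →
      ∃ k : ℕ, 0 < k ∧ g ^ k ∈ H := by
    intro m n hlt he
    refine ⟨n - m, by omega, ?_⟩
    have := QuotientGroup.eq.mp he
    rwa [show n = m + (n - m) by omega, pow_add, inv_mul_cancel_left] at this
  rcases hne.lt_or_gt with h | h
  · exact key m n h heq
  · exact key n m h heq.symm

lemma nilpotent_pow_d {d : ℕ} (Nl : Module.End ℤ (Fin d → ℤ)) (h : IsNilpotent Nl) :
    Nl ^ d = 0 := by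
  have hch := h.charpoly_eq_X_pow_finrank
  have h2 := Nl.aeval_self_charpoly
  rw [hch, map_pow, Polynomial.aeval_X] at h2
  rwa [Module.finrank_pi, Fintype.card_fin] at h2

variable {d : ℕ} (φ : (Fin d → ℤ) ≃ₗ[ℤ] (Fin d → ℤ))

lemma ii_pow (v : Fin d → ℤ) (M : ℕ) : (ii φ v) ^ M = ii φ ((M : ℤ) • v) := by
  rw [ii, ii, ← map_pow]
  congr 1

lemma jj_pow (a : ℤ) (M : ℕ) : (jj φ a) ^ M = jj φ ((M : ℤ) * a) := by
  rw [jj, jj, ← map_pow]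
  congr 1

theorem forward (H : Subgroup (MapTorus d φ)) (hfi : H.FiniteIndex)
    (hnil : Group.IsNilpotent H) :
    ∃ k : ℕ, 0 < k ∧ (φ.toLinearMap ^ k - 1) ^ d = 0 := by
  haveI := hfi
  obtain ⟨k, hk, hgk⟩ := exists_pow_mem H (jj φ 1)
  rw [jj_pow, mul_one] at hgk
  obtain ⟨n, hn⟩ := nilpotent_iff_lowerCentralSeries.mp hnil
  set Nl : Module.End ℤ (Fin d → ℤ) := φ.toLinearMap ^ k - 1 with hNl
  have hzp : ∀ w : Fin d → ℤ, (φ ^ (k : ℤ)) w - w = Nl w := by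
    intro w
    have h1 : (φ ^ (k : ℤ)) w = ((lin φ) ^ k) w := by
      rw [zpow_natCast, ← map_pow]; rfl
    rw [h1, hNl]
    have : lin φ = φ.toLinearMap := rfl
    rw [this, LinearMap.sub_apply, Module.End.one_apply]
  have key : ∀ i : Fin d, (Nl ^ n) (Pi.single i 1) = 0 := by
    intro i
    obtain ⟨M, hM, hgM⟩ := exists_pow_mem H (ii φ (Pi.single i 1))
    rw [ii_pow] at hgM
    set v0 : Fin d → ℤ := (M : ℤ) • Pi.single i 1 with hv0
    set g0 : H := ⟨jj φ (k : ℤ), hgk⟩ with hg0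
    set x : ℕ → H := fun j => Nat.rec (⟨ii φ v0, hgM⟩ : H) (fun _ xj => ⁅g0, xj⁆) j with hx
    have hx0 : x 0 = ⟨ii φ v0, hgM⟩ := rfl
    have hxs : ∀ j, x (j + 1) = ⁅g0, x j⁆ := fun j => rfl
    have hcoe : ∀ j, (x j : MapTorus d φ) = ii φ ((Nl ^ j) v0) := by
      intro j
      induction j with
      | zero => rw [hx0]; simp [pow_zero]
      | succ j ih =>
        rw [hxs j]
        have : ((⁅g0, x j⁆ : H) : MapTorus d φ) = ⁅(g0 : MapTorus d φ), ((x j : H) : MapTorus d φ)⁆ := rfl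
        rw [this, ih, hg0]
        show jj φ (k : ℤ) * ii φ ((Nl ^ j) v0) * (jj φ (k : ℤ))⁻¹ * (ii φ ((Nl ^ j) v0))⁻¹ = _
        rw [comm2 φ (k : ℤ) ((Nl ^ j) v0)]
        congr 1
        rw [hzp]
        show Nl ((Nl ^ j) v0) = (Nl ^ (j + 1)) v0
        rw [pow_succ']
        rfl
    have hmem : ∀ j, x j ∈ (⊤ : Subgroup H).lowerCentralSeries j := by
      intro j
      induction j with
      | zero => exact Subgroup.mem_top _
      | succ j ih =>
        rw [hxs j, lowerCentralSeries_succ, ← commutatorElement_inv]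
        exact Subgroup.inv_mem _
          (Subgroup.commutator_mem_commutator ih (Subgroup.mem_top g0))
    have hone : x n = 1 := by
      have := hmem n
      rw [hn, Subgroup.mem_bot] at this
      exact this
    have : ii φ ((Nl ^ n) v0) = ii φ 0 := by
      rw [← hcoe n, hone]
      rfl
    have h4 := ii_injective φ this
    rw [hv0, map_smul, smul_eq_zero] at h4
    rcases h4 with h4 | h4
    · exact absurd h4 (by exact_mod_cast hM.ne')
    · exact h4
  have hNn : Nl ^ n = 0 := by
    apply (Pi.basisFun ℤ (Fin d)).ext
    intro i
    rw [Pi.basisFun_apply, key i, LinearMap.zero_apply]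
  exact ⟨k, hk, nilpotent_pow_d Nl ⟨n, hNn⟩⟩

end VNQU


theorem virtually_nilpotent_iff_quasiunipotent (d : ℕ)
    (φ : (Fin d → ℤ) ≃ₗ[ℤ] (Fin d → ℤ)) :
    (∃ H : Subgroup (MapTorus d φ), H.FiniteIndex ∧ Group.IsNilpotent H) ↔
      ∃ k : ℕ, 0 < k ∧ (φ.toLinearMap ^ k - 1) ^ d = 0 := by
  constructor
  · rintro ⟨H, hfi, hnil⟩
    exact VNQU.forward φ H hfi hnil
  · rintro ⟨k, hk, h⟩
    exact VNQU.backward φ hk h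
end

section
/- Let p be a prime, A = ℤ^d, φ ∈ Aut(A), and let φ̄ be the induced automorphism of Ā = A/pA ≅ 𝔽_p^d. Then the following are equivalent: (1) the semidirect product ℤ ⋉_{φ̄} Ā is residually p; (2) φ̄ is unipotent; (3) φ̄^{p^k} = id for some integer k > 0. -/
/-- The action of `ℤ` on `𝔽_p^d` where `1` acts by `ψ`. -/
def sdActP (p d : ℕ) [Fact p.Prime] (ψ : (Fin d → ZMod p) ≃ₗ[ZMod p] (Fin d → ZMod p)) :
    Multiplicative ℤ →* MulAut (Multiplicative (Fin d → ZMod p)) :=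
  zpowersHom _ (AddEquiv.toMultiplicative ψ.toAddEquiv)

/-- The semidirect product `ℤ ⋉_ψ 𝔽_p^d`. -/
abbrev MapTorusP (p d : ℕ) [Fact p.Prime]
    (ψ : (Fin d → ZMod p) ≃ₗ[ZMod p] (Fin d → ZMod p)) :=
  Multiplicative (Fin d → ZMod p) ⋊[sdActP p d ψ] Multiplicative ℤ

variable (p d : ℕ) [Fact p.Prime] (ψ : (Fin d → ZMod p) ≃ₗ[ZMod p] (Fin d → ZMod p))

lemma sdActP_apply (g : Multiplicative ℤ) :
    (sdActP p d ψ) g = (AddEquiv.toMultiplicative ψ.toAddEquiv) ^ (g.toAdd) := rfl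

lemma psit_pow (m : ℕ) (x : Multiplicative (Fin d → ZMod p)) :
    ((AddEquiv.toMultiplicative ψ.toAddEquiv : MulAut (Multiplicative (Fin d → ZMod p))) ^ m) x
      = Multiplicative.ofAdd ((ψ.toLinearMap ^ m) x.toAdd) := by
  induction m with
  | zero => simp
  | succ n ih =>
    rw [pow_succ', MulAut.mul_apply, ih]
    show Multiplicative.ofAdd (ψ ((ψ.toLinearMap ^ n) x.toAdd)) = _
    rw [pow_succ']
    rfl

lemma inl_conj {P : Type} [Group P] (f : MapTorusP p d ψ →* P) (x : Fin d → ZMod p) :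
    f (SemidirectProduct.inl (Multiplicative.ofAdd (ψ x)))
      = f (SemidirectProduct.inr (Multiplicative.ofAdd (1:ℤ)))
        * f (SemidirectProduct.inl (Multiplicative.ofAdd x))
        * (f (SemidirectProduct.inr (Multiplicative.ofAdd (1:ℤ))))⁻¹ := by
  have h : (SemidirectProduct.inl (Multiplicative.ofAdd (ψ x)) : MapTorusP p d ψ)
      = SemidirectProduct.inr (Multiplicative.ofAdd (1:ℤ))
        * SemidirectProduct.inl (Multiplicative.ofAdd x)
        * (SemidirectProduct.inr (Multiplicative.ofAdd (1:ℤ)))⁻¹ := by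
    rw [← map_inv, ← SemidirectProduct.inl_aut]
    congr 1
  rw [h, map_mul, map_mul, map_inv]

lemma inl_conj_pow {P : Type} [Group P] (f : MapTorusP p d ψ →* P) (j : ℕ) (x : Fin d → ZMod p) :
    f (SemidirectProduct.inl (Multiplicative.ofAdd ((ψ.toLinearMap ^ j) x)))
      = (f (SemidirectProduct.inr (Multiplicative.ofAdd (1:ℤ)))) ^ j
        * f (SemidirectProduct.inl (Multiplicative.ofAdd x))
        * ((f (SemidirectProduct.inr (Multiplicative.ofAdd (1:ℤ)))) ^ j)⁻¹ := by
  induction j with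
  | zero => simp
  | succ n ih =>
    have h1 : (ψ.toLinearMap ^ (n+1)) x = ψ ((ψ.toLinearMap ^ n) x) := by
      rw [pow_succ']; rfl
    rw [h1, inl_conj, ih]
    group

lemma charP_end (hnt : Nontrivial (Fin d → ZMod p)) :
    CharP (Module.End (ZMod p) (Fin d → ZMod p)) p := by
  have hinj : Function.Injective (algebraMap (ZMod p) (Module.End (ZMod p) (Fin d → ZMod p))) := by
    intro r s h
    obtain ⟨v, hv⟩ := exists_ne (0 : Fin d → ZMod p)
    have h2 := LinearMap.congr_fun h v
    rw [Module.algebraMap_end_apply, Module.algebraMap_end_apply] at h2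
    have h3 := sub_eq_zero.mpr h2
    rw [← sub_smul] at h3
    rcases smul_eq_zero.mp h3 with h' | h'
    · exact sub_eq_zero.mp h'
    · exact absurd h' hv
  exact charP_of_injective_algebraMap hinj p

lemma nilp_pow_d (T : Module.End (ZMod p) (Fin d → ZMod p)) (h : IsNilpotent T) : T ^ d = 0 := by
  have h1 := h.charpoly_eq_X_pow_finrank
  have h2 := T.aeval_self_charpoly
  rw [h1] at h2
  simpa [Module.finrank_fin_fun] using h2

lemma resid_to_unip (h : ResiduallyP p (MapTorusP p d ψ)) : (ψ.toLinearMap - 1) ^ d = 0 := by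
  by_contra hT
  set T : Module.End (ZMod p) (Fin d → ZMod p) := ψ.toLinearMap - 1 with hTdef
  -- nontriviality
  have hnt : Nontrivial (Fin d → ZMod p) := by
    rcases eq_or_ne d 0 with rfl | hd
    · exact absurd (Subsingleton.elim _ _) hT
    · haveI : Nonempty (Fin d) := ⟨⟨0, Nat.pos_of_ne_zero hd⟩⟩
      infer_instance
  haveI := hnt
  haveI : CharP (Module.End (ZMod p) (Fin d → ZMod p)) p := charP_end p d hnt
  -- monotonicity of ranges
  have hmono : ∀ i j : ℕ, i ≤ j → LinearMap.range (T ^ j) ≤ LinearMap.range (T ^ i) := by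
    intro i j hij
    obtain ⟨k, rfl⟩ := Nat.exists_eq_add_of_le hij
    rintro x ⟨y, rfl⟩
    exact ⟨(T ^ k) y, by rw [← Module.End.mul_apply, ← pow_add]⟩
  -- stabilization
  have hstab : ∃ N : ℕ, ∀ m : ℕ, N ≤ m → LinearMap.range (T ^ m) = LinearMap.range (T ^ N) := by
    set r : ℕ → ℕ := fun n => Module.finrank (ZMod p) (LinearMap.range (T ^ n)) with hr
    have hne : (Set.range r).Nonempty := ⟨r 0, 0, rfl⟩
    obtain ⟨N, hN⟩ := Nat.sInf_mem hne
    refine ⟨N, fun m hm => ?_⟩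
    refine Submodule.eq_of_le_of_finrank_le (hmono N m hm) ?_
    show r N ≤ r m
    rw [hN]
    exact Nat.sInf_le ⟨m, rfl⟩
  obtain ⟨N, hN⟩ := hstab
  -- the stable range is nonzero
  have hbot : LinearMap.range (T ^ N) ≠ ⊥ := by
    intro hb
    exact hT (nilp_pow_d p d T ⟨N, LinearMap.range_eq_bot.mp hb⟩)
  obtain ⟨b, hbmem, hb0⟩ := Submodule.ne_bot_iff _ |>.mp hbot
  -- apply residual p-ness
  have hg : (SemidirectProduct.inl (Multiplicative.ofAdd b) : MapTorusP p d ψ) ≠ 1 := by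
    intro hc
    have h1 : Multiplicative.ofAdd b = 1 := congrArg SemidirectProduct.left hc
    exact hb0 (by simpa using h1)
  obtain ⟨P, _, _, f, hP, hfb⟩ := h _ hg
  set c := f (SemidirectProduct.inr (Multiplicative.ofAdd (1:ℤ))) with hc
  obtain ⟨k, hk⟩ := IsPGroup.iff_orderOf.mp hP c
  -- enlarge k
  set K := max k N with hK
  have hcK : c ^ p ^ K = 1 := by
    have : orderOf c ∣ p ^ K := hk ▸ pow_dvd_pow p (le_max_left k N)
    exact orderOf_dvd_iff_pow_eq_one.mp this
  have hNK : N ≤ p ^ K := le_trans (le_max_right k N)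
    (le_of_lt (Nat.lt_pow_self (Fact.out : p.Prime).one_lt : K < p ^ K))
  -- get a with T^(p^K) a = b
  have hbm : b ∈ LinearMap.range (T ^ p ^ K) := by rw [hN _ hNK]; exact hbmem
  obtain ⟨a, ha⟩ := hbm
  -- char p identity
  have hkey : T ^ p ^ K = ψ.toLinearMap ^ p ^ K - 1 := by
    rw [hTdef, sub_pow_char_pow_of_commute p K (Commute.one_right ψ.toLinearMap), one_pow]
  have hab : b = (ψ.toLinearMap ^ p ^ K) a - a := by
    rw [← ha, hkey]; simp
  apply hfb
  rw [hab, ofAdd_sub, map_div, map_div, inl_conj_pow, ← hc, hcK]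
  simp

lemma unip_iff_pow :
    (ψ.toLinearMap - 1) ^ d = 0 ↔ ∃ k : ℕ, 0 < k ∧ ψ.toLinearMap ^ p ^ k = 1 := by
  rcases eq_or_ne d 0 with rfl | hd
  · haveI : Subsingleton (Module.End (ZMod p) (Fin 0 → ZMod p)) := by infer_instance
    exact ⟨fun _ => ⟨1, one_pos, Subsingleton.elim _ _⟩, fun _ => Subsingleton.elim _ _⟩
  · haveI : Nonempty (Fin d) := ⟨⟨0, Nat.pos_of_ne_zero hd⟩⟩
    haveI : Nontrivial (Fin d → ZMod p) := by infer_instance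
    haveI : CharP (Module.End (ZMod p) (Fin d → ZMod p)) p := charP_end p d ‹_›
    constructor
    · intro h0
      refine ⟨d + 1, Nat.succ_pos _, ?_⟩
      have hψ : ψ.toLinearMap = 1 + (ψ.toLinearMap - 1) := (add_sub_cancel 1 ψ.toLinearMap).symm
      rw [hψ, add_pow_char_pow_of_commute p (d+1) (Commute.one_left _), one_pow]
      have hd' : d ≤ p ^ (d + 1) :=
        le_of_lt (lt_of_lt_of_le (Nat.lt_pow_self (Fact.out : p.Prime).one_lt : d < p ^ d)
          (Nat.pow_le_pow_right (Fact.out : p.Prime).pos (Nat.le_succ d)))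
      obtain ⟨e, he⟩ := Nat.exists_eq_add_of_le hd'
      rw [he, pow_add, h0, zero_mul, add_zero]
    · rintro ⟨k, hk, h1⟩
      exact nilp_pow_d p d _ ⟨p ^ k, by
        rw [sub_pow_char_pow_of_commute p k (Commute.one_right _), one_pow, h1, sub_self]⟩

lemma pow_to_resid (hk : ∃ k : ℕ, 0 < k ∧ ψ.toLinearMap ^ p ^ k = 1) :
    ResiduallyP p (MapTorusP p d ψ) := by
  classical
  obtain ⟨k, hk0, hψk⟩ := hk
  intro g hg
  set ψt : MulAut (Multiplicative (Fin d → ZMod p)) := AddEquiv.toMultiplicative ψ.toAddEquiv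
    with hψt
  set z : ℤ := g.right.toAdd with hz
  set n : ℕ := max k z.natAbs with hn
  haveI : NeZero p := ⟨(Fact.out : p.Prime).ne_zero⟩
  haveI : NeZero (p ^ n) := ⟨pow_ne_zero n (Fact.out : p.Prime).ne_zero⟩
  -- order of ψt divides p ^ n
  have hordL : ψ.toLinearMap ^ p ^ n = 1 := by
    have : p ^ n = p ^ k * p ^ (n - k) := by
      rw [← pow_add, Nat.add_sub_cancel' (le_max_left k z.natAbs)]
    rw [this, pow_mul, hψk, one_pow]
  have hord : ψt ^ (p ^ n : ℕ) = 1 := by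
    ext x
    rw [psit_pow, hordL]
    simp
  -- the action of ZMod (p ^ n)
  have h0 : (zmultiplesHom _ (Additive.ofMul ψt)) ((p ^ n : ℕ) : ℤ) = 0 := by
    rw [zmultiplesHom_apply, ← ofMul_zpow, zpow_natCast, hord]
    rfl
  set α : ZMod (p ^ n) →+ Additive (MulAut (Multiplicative (Fin d → ZMod p))) :=
    ZMod.lift (p ^ n) ⟨zmultiplesHom _ (Additive.ofMul ψt), h0⟩ with hα
  set β : Multiplicative (ZMod (p ^ n)) →* MulAut (Multiplicative (Fin d → ZMod p)) :=
    AddMonoidHom.toMultiplicativeLeft α with hβ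
  set ρ : Multiplicative ℤ →* Multiplicative (ZMod (p ^ n)) :=
    AddMonoidHom.toMultiplicative (Int.castAddHom (ZMod (p ^ n))) with hρ
  have hβρ : ∀ w : Multiplicative ℤ, β (ρ w) = ψt ^ (w.toAdd) := by
    intro w
    show (α ((w.toAdd : ℤ) : ZMod (p ^ n))).toMul = _
    rw [hα, ZMod.lift_coe]
    show ((w.toAdd : ℤ) • Additive.ofMul ψt).toMul = _
    rw [← ofMul_zpow]
    rfl
  have hcompat : ∀ w : Multiplicative ℤ,
      (MonoidHom.id _).comp ((sdActP p d ψ) w).toMonoidHom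
        = (β (ρ w)).toMonoidHom.comp (MonoidHom.id _) := by
    intro w
    refine MonoidHom.ext fun x => ?_
    show ((sdActP p d ψ) w) x = (β (ρ w)) x
    rw [sdActP_apply, hβρ]
  set θ := SemidirectProduct.map (MonoidHom.id _) ρ hcompat with hθ
  -- the target group
  set P := Multiplicative (Fin d → ZMod p) ⋊[β] Multiplicative (ZMod (p ^ n)) with hP
  have hcard : Nat.card P = p ^ (d + n) := by
    have e : P ≃ (Multiplicative (Fin d → ZMod p)) × Multiplicative (ZMod (p ^ n)) :=
      ⟨fun x => (x.left, x.right), fun x => ⟨x.1, x.2⟩, fun _ => rfl, fun _ => rfl⟩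
    rw [Nat.card_congr e, Nat.card_prod,
      Nat.card_congr (Multiplicative.toAdd (α := Fin d → ZMod p)),
      Nat.card_congr (Multiplicative.toAdd (α := ZMod (p ^ n))), Nat.card_fun]
    simp [Nat.card_zmod, pow_add]
  haveI hfin : Finite P := Nat.finite_of_card_ne_zero (by
    rw [hcard]; exact pow_ne_zero _ (Fact.out : p.Prime).ne_zero)
  refine ⟨P, inferInstance, hfin, θ, IsPGroup.of_card hcard, ?_⟩
  -- nontriviality of the image
  intro hθg
  have hleft : g.left = 1 := by
    have := congrArg SemidirectProduct.left hθg
    exact this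
  have hright : ρ g.right = 1 := by
    have := congrArg SemidirectProduct.right hθg
    exact this
  -- so g.right ≠ 1
  have hgr : g.right ≠ 1 := by
    intro hr
    apply hg
    ext
    · rw [hleft]; rfl
    · rw [hr]; rfl
  have hz0 : z ≠ 0 := by
    intro h0'
    apply hgr
    rw [hz] at h0'
    simpa using congrArg Multiplicative.ofAdd h0'
  -- ρ g.right = ofAdd (z : ZMod (p ^ n))
  have : ((z : ℤ) : ZMod (p ^ n)) = 0 := by
    have := congrArg Multiplicative.toAdd hright
    simpa [hρ, hz] using this
  have hdvd : ((p ^ n : ℕ) : ℤ) ∣ z := (ZMod.intCast_zmod_eq_zero_iff_dvd z (p ^ n)).mp this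
  have hle : (p ^ n : ℕ) ≤ z.natAbs := by
    have h1 : (p ^ n : ℕ) ∣ z.natAbs := by
      have h2 := Int.natAbs_dvd_natAbs.mpr hdvd
      rwa [Int.natAbs_natCast] at h2
    exact Nat.le_of_dvd (Int.natAbs_pos.mpr hz0) h1
  have hlt : z.natAbs < p ^ n :=
    lt_of_le_of_lt (le_max_right k z.natAbs) (Nat.lt_pow_self (Fact.out : p.Prime).one_lt : n < p ^ n)
  exact absurd hle (not_le.mpr hlt)

theorem mod_p_residually_p_tfae (p d : ℕ) [Fact p.Prime]
    (φ : (Fin d → ℤ) ≃ₗ[ℤ] (Fin d → ℤ))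
    (ψ : (Fin d → ZMod p) ≃ₗ[ZMod p] (Fin d → ZMod p))
    (hcomm : ∀ x : Fin d → ℤ, ψ (fun i => (x i : ZMod p)) = fun i => ((φ x i : ℤ) : ZMod p)) :
    (ResiduallyP p (MapTorusP p d ψ) ↔ (ψ.toLinearMap - 1) ^ d = 0) ∧
      ((ψ.toLinearMap - 1) ^ d = 0 ↔ ∃ k : ℕ, 0 < k ∧ ψ.toLinearMap ^ p ^ k = 1) := by
  have h23 := unip_iff_pow p d ψ
  exact ⟨⟨resid_to_unip p d ψ, fun h2 => pow_to_resid p d ψ (h23.mp h2)⟩, h23⟩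
end

section
/- Let φ be an automorphism of ℤ^d, p a prime, and suppose the reduction φ̄ of φ modulo p is unipotent on 𝔽_p^d. Then G = ℤ ⋉_φ ℤ^d is residually p. -/
open Polynomial

lemma sup_pow_le {R : Type*} [CommRing R] (J K : Ideal R) :
    ∀ s m n : ℕ, m + n = s → (J ⊔ K) ^ s ≤ J ^ m ⊔ K ^ n := by
  intro s
  induction s with
  | zero =>
    rintro m n hmn
    obtain ⟨rfl, rfl⟩ : m = 0 ∧ n = 0 := by omega
    simp
  | succ s ih =>
    rintro m n hmn
    rcases Nat.eq_zero_or_pos m with rfl | hm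
    · exact le_trans le_top (by simp [pow_zero, Ideal.one_eq_top])
    rcases Nat.eq_zero_or_pos n with rfl | hn
    · exact le_trans le_top (by simp [pow_zero, Ideal.one_eq_top])
    obtain ⟨m', rfl⟩ := Nat.exists_eq_succ_of_ne_zero hm.ne'
    obtain ⟨n', rfl⟩ := Nat.exists_eq_succ_of_ne_zero hn.ne'
    have h1 : (J ⊔ K) ^ s * J ≤ J ^ (m' + 1) ⊔ K ^ (n' + 1) := by
      calc (J ⊔ K) ^ s * J ≤ (J ^ m' ⊔ K ^ (n' + 1)) * J :=
            Ideal.mul_mono_left (ih m' (n' + 1) (by omega))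
        _ = J ^ m' * J ⊔ K ^ (n' + 1) * J := Ideal.sup_mul _ _ _
        _ ≤ J ^ (m' + 1) ⊔ K ^ (n' + 1) :=
            sup_le_sup (by rw [← pow_succ]) Ideal.mul_le_left
    have h2 : (J ⊔ K) ^ s * K ≤ J ^ (m' + 1) ⊔ K ^ (n' + 1) := by
      calc (J ⊔ K) ^ s * K ≤ (J ^ (m' + 1) ⊔ K ^ n') * K :=
            Ideal.mul_mono_left (ih (m' + 1) n' (by omega))
        _ = J ^ (m' + 1) * K ⊔ K ^ n' * K := Ideal.sup_mul _ _ _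
        _ ≤ J ^ (m' + 1) ⊔ K ^ (n' + 1) :=
            sup_le_sup Ideal.mul_le_left (by rw [← pow_succ])
    calc (J ⊔ K) ^ (s + 1) = (J ⊔ K) ^ s * (J ⊔ K) := pow_succ _ _
      _ = (J ⊔ K) ^ s * J ⊔ (J ⊔ K) ^ s * K := Ideal.mul_sup _ _ _
      _ ≤ _ := sup_le h1 h2

lemma one_add_X_pow_sub_one_mem_span_X (N : ℕ) :
    ((1 + X : ℤ[X]) ^ N - 1) ∈ Ideal.span {(X : ℤ[X])} := by
  rw [Ideal.mem_span_singleton, X_dvd_iff]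
  simp [coeff_zero_eq_eval_zero]

lemma one_add_X_pow_prime_pow_sub_one_mem (p : ℕ) (hp : p.Prime) (m : ℕ) :
    ((1 + X : ℤ[X]) ^ p ^ m - 1) ∈ (Ideal.span {C (p : ℤ), X}) ^ m := by
  induction m with
  | zero => simp [Ideal.one_eq_top]
  | succ m ih =>
    set I : Ideal ℤ[X] := Ideal.span {C (p : ℤ), X} with hI
    have hpI : ((p : ℤ[X])) ∈ I := by
      rw [← C_eq_natCast]
      exact Ideal.subset_span (by simp)
    have hXI : (X : ℤ[X]) ∈ I := Ideal.subset_span (by simp)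
    set b : ℤ[X] := (1 + X) ^ p ^ m - 1 with hb
    have hbI : b ∈ I ^ m := ih
    have hbX : b ∈ I := by
      have := one_add_X_pow_sub_one_mem_span_X (p ^ m)
      rw [Ideal.mem_span_singleton] at this
      exact (Ideal.mem_span_singleton.mpr this |> fun h => Ideal.span_mono (by simp) h)
    have hexp : ((1 + X : ℤ[X]) ^ p ^ (m + 1) - 1) =
        ∑ i ∈ Finset.range p, b ^ (i + 1) * (p.choose (i + 1) : ℤ[X]) := by
      have h1 : ((1 + X : ℤ[X]) ^ p ^ (m + 1)) = (b + 1) ^ p := by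
        rw [hb, sub_add_cancel, ← pow_mul, pow_succ]
      rw [h1, add_pow]
      rw [Finset.sum_range_succ' (fun i => b ^ i * 1 ^ (p - i) * (p.choose i : ℤ[X])) p]
      simp [one_pow, Nat.choose_zero_right]
    rw [hexp]
    refine Ideal.sum_mem _ (fun i hi => ?_)
    simp only [Finset.mem_range] at hi
    rcases eq_or_lt_of_le (Nat.succ_le_of_lt hi) with heq | hlt
    · -- i + 1 = p
      rw [show i + 1 = p from heq, Nat.choose_self, Nat.cast_one, mul_one]
      have : b ^ p = b * b ^ (p - 1) := by
        rw [← pow_succ']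
        congr 1
        omega
      rw [this, pow_succ]
      exact Ideal.mul_mem_mul hbI (by
        have hp1 : p - 1 ≠ 0 := by have := hp.two_le; omega
        obtain ⟨j, hj⟩ := Nat.exists_eq_succ_of_ne_zero hp1
        rw [hj, pow_succ]
        exact I.mul_mem_left _ hbX)
    · -- i + 1 < p : p ∣ choose
      obtain ⟨t, ht⟩ := hp.dvd_choose_self (Nat.succ_ne_zero i) hlt
      have key : b ^ (i + 1) * ((p.choose (i + 1) : ℕ) : ℤ[X]) =
          ((t : ℤ[X]) * (b ^ i * b)) * (p : ℤ[X]) := by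
        push_cast [ht]
        ring
      rw [key, pow_succ]
      exact Ideal.mul_mem_mul ((I ^ m).mul_mem_left _ ((I ^ m).mul_mem_left _ hbI)) hpI

lemma matrix_pow_eq_one (p : ℕ) (hp : p.Prime) (d k : ℕ)
    (B c : Matrix (Fin d) (Fin d) (ZMod (p ^ k)))
    (hB : (B - 1) ^ d = (p : ZMod (p ^ k)) • c) :
    B ^ (p ^ (k + d * k)) = 1 := by
  rcases Nat.eq_zero_or_pos k with rfl | hk
  · have : Subsingleton (ZMod (p ^ 0)) := by rw [pow_zero]; infer_instance
    have : Subsingleton (Matrix (Fin d) (Fin d) (ZMod (p ^ 0))) := by infer_instance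
    exact Subsingleton.elim _ _
  set a : Matrix (Fin d) (Fin d) (ZMod (p ^ k)) := B - 1 with ha
  set θ : ℤ[X] →ₐ[ℤ] Matrix (Fin d) (Fin d) (ZMod (p ^ k)) := Polynomial.aeval a with hθ
  have hpk0 : ((p : ZMod (p ^ k))) ^ k = 0 := by
    have h : ((p : ZMod (p ^ k))) ^ k = ((p ^ k : ℕ) : ZMod (p ^ k)) := by push_cast; ring
    rw [h, ZMod.natCast_self]
  have hC : (((p : ℤ)) : Matrix (Fin d) (Fin d) (ZMod (p ^ k))) ^ k = 0 := by
    have h1 : (((p : ℤ)) : Matrix (Fin d) (Fin d) (ZMod (p ^ k))) ^ k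
        = (((p ^ k : ℕ)) : Matrix (Fin d) (Fin d) (ZMod (p ^ k))) := by push_cast; ring
    have h2 := map_natCast
      (algebraMap (ZMod (p ^ k)) (Matrix (Fin d) (Fin d) (ZMod (p ^ k)))) (p ^ k)
    rw [h1, ← h2, ZMod.natCast_self, map_zero]
  have hker1 : (Ideal.span {(C (p : ℤ) : ℤ[X])}) ^ k ≤ RingHom.ker θ := by
    rw [Ideal.span_singleton_pow]
    intro f hf
    obtain ⟨g, hg⟩ := Ideal.mem_span_singleton.mp hf
    rw [RingHom.mem_ker, hg, map_mul, map_pow]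
    have hCp : θ (C (p : ℤ)) = (((p : ℤ)) : Matrix (Fin d) (Fin d) (ZMod (p ^ k))) := by
      rw [hθ, aeval_C]
      exact eq_intCast _ _
    rw [hCp, hC, zero_mul]
  have hker2 : (Ideal.span {(X : ℤ[X])}) ^ (d * k) ≤ RingHom.ker θ := by
    rw [Ideal.span_singleton_pow]
    intro f hf
    obtain ⟨g, hg⟩ := Ideal.mem_span_singleton.mp hf
    rw [RingHom.mem_ker, hg, map_mul, map_pow]
    have hX : θ X = a := by rw [hθ, aeval_X]
    rw [hX, pow_mul, hB, _root_.smul_pow, hpk0, zero_smul, zero_mul]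
  have hker : (Ideal.span {(C (p : ℤ) : ℤ[X]), X}) ^ (k + d * k) ≤ RingHom.ker θ := by
    rw [show ({(C (p : ℤ) : ℤ[X]), X} : Set ℤ[X]) = insert (C (p : ℤ)) {X} from rfl,
      Ideal.span_insert]
    exact le_trans (sup_pow_le _ _ _ k (d * k) rfl) (sup_le hker1 hker2)
  have h0 : θ ((1 + X : ℤ[X]) ^ p ^ (k + d * k) - 1) = 0 :=
    hker (one_add_X_pow_prime_pow_sub_one_mem p hp (k + d * k))
  rw [map_sub, map_pow, map_add, map_one, hθ, aeval_X, sub_eq_zero, ha,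
    show (1 : Matrix (Fin d) (Fin d) (ZMod (p ^ k))) + (B - 1) = B by abel] at h0
  exact h0

/-- Coordinatewise reduction mod `q` as an additive hom. -/
def redAdd (d q : ℕ) : (Fin d → ℤ) →+ (Fin d → ZMod q) where
  toFun x := fun i => ((x i : ZMod q))
  map_zero' := by funext i; simp
  map_add' x y := by funext i; simp only [Pi.add_apply]; push_cast; ring

/-- The additive automorphism of `(ZMod q)^d` given by a matrix of finite order. -/
def mulVecAddAut {d q : ℕ} (B : Matrix (Fin d) (Fin d) (ZMod q)) (r : ℕ) (hr : r ≠ 0)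
    (hB : B ^ r = 1) : (Fin d → ZMod q) ≃+ (Fin d → ZMod q) where
  toFun := B.mulVec
  invFun := (B ^ (r - 1)).mulVec
  left_inv v := by
    rw [Matrix.mulVec_mulVec, ← pow_succ, show r - 1 + 1 = r by omega, hB, Matrix.one_mulVec]
  right_inv v := by
    rw [Matrix.mulVec_mulVec, ← pow_succ', show r - 1 + 1 = r by omega, hB, Matrix.one_mulVec]
  map_add' x y := by exact Matrix.mulVec_add B x y

/-- The automorphism above, multiplicatively. -/
def theAut {d q : ℕ} (B : Matrix (Fin d) (Fin d) (ZMod q)) (r : ℕ) (hr : r ≠ 0)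
    (hB : B ^ r = 1) : MulAut (Multiplicative (Fin d → ZMod q)) :=
  AddEquiv.toMultiplicative (mulVecAddAut B r hr hB)

lemma theAut_apply {d q : ℕ} (B : Matrix (Fin d) (Fin d) (ZMod q)) (r : ℕ) (hr : r ≠ 0)
    (hB : B ^ r = 1) (x : Multiplicative (Fin d → ZMod q)) :
    theAut B r hr hB x = Multiplicative.ofAdd (B.mulVec x.toAdd) := by rfl

lemma theAut_pow_apply {d q : ℕ} (B : Matrix (Fin d) (Fin d) (ZMod q)) (r : ℕ) (hr : r ≠ 0)
    (hB : B ^ r = 1) (n : ℕ) (x : Multiplicative (Fin d → ZMod q)) :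
    (theAut B r hr hB ^ n) x = Multiplicative.ofAdd ((B ^ n).mulVec x.toAdd) := by
  induction n with
  | zero => simp [Matrix.one_mulVec]
  | succ n ih =>
    rw [pow_succ', MulAut.mul_apply, theAut_apply, ih]
    simp [Matrix.mulVec_mulVec, ← pow_succ']

lemma theAut_pow_r {d q : ℕ} (B : Matrix (Fin d) (Fin d) (ZMod q)) (r : ℕ) (hr : r ≠ 0)
    (hB : B ^ r = 1) : theAut B r hr hB ^ r = 1 := by
  ext x
  rw [theAut_pow_apply, hB, Matrix.one_mulVec]
  rfl

/-- The action of `ZMod r` on `(ZMod q)^d` via `B`. -/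
def theAct {d q : ℕ} (B : Matrix (Fin d) (Fin d) (ZMod q)) (r : ℕ) (hr : r ≠ 0)
    (hB : B ^ r = 1) : Multiplicative (ZMod r) →* MulAut (Multiplicative (Fin d → ZMod q)) :=
  AddMonoidHom.toMultiplicativeLeft
    (ZMod.lift r ⟨zmultiplesHom _ (Additive.ofMul (theAut B r hr hB)), by
      rw [zmultiplesHom_apply, ← ofMul_zpow, zpow_natCast, theAut_pow_r]
      rfl⟩)

lemma act_aux {M : Type*} [Group M] (r : ℕ) (f : {f : ℤ →+ Additive M // f r = 0}) (z : ℤ) :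
    AddMonoidHom.toMultiplicativeLeft (ZMod.lift r f) (Multiplicative.ofAdd ((z : ZMod r)))
      = Additive.toMul (f.val z) := by
  rw [AddMonoidHom.coe_toMultiplicativeLeft]
  show Additive.toMul (ZMod.lift r f (Multiplicative.toAdd (Multiplicative.ofAdd ((z : ZMod r))))) = _
  rw [toAdd_ofAdd, ZMod.lift_coe]

lemma theAct_intCast {d q : ℕ} (B : Matrix (Fin d) (Fin d) (ZMod q)) (r : ℕ) (hr : r ≠ 0)
    (hB : B ^ r = 1) (z : ℤ) :
    theAct B r hr hB (Multiplicative.ofAdd ((z : ZMod r))) = theAut B r hr hB ^ z := by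
  unfold theAct
  rw [act_aux, zmultiplesHom_apply, ← ofMul_zpow]
  rfl
lemma intertwine_zpow {G H : Type*} [Group G] [Group H] (f : G →* H) (a : MulAut G)
    (b : MulAut H) (h : ∀ x, f (a x) = b (f x)) :
    ∀ (z : ℤ) (x : G), f ((a ^ z) x) = (b ^ z) (f x) := by
  have hinv : ∀ x, f (a⁻¹ x) = b⁻¹ (f x) := by
    intro x
    have h2 := h (a⁻¹ x)
    rw [show a (a⁻¹ x) = x from a.apply_symm_apply x] at h2
    rw [h2]
    exact (b.symm_apply_apply _).symm
  intro z
  induction z using Int.induction_on with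
  | zero => intro x; simp
  | succ n ih =>
    intro x
    have : (a ^ ((n : ℤ) + 1)) x = (a ^ (n : ℤ)) (a x) := by
      rw [zpow_add_one, MulAut.mul_apply]
    rw [this, ih, h, zpow_add_one, MulAut.mul_apply]
  | pred n ih =>
    intro x
    have : (a ^ (-(n : ℤ) - 1)) x = (a ^ (-(n : ℤ))) (a⁻¹ x) := by
      rw [zpow_sub_one, MulAut.mul_apply]
    rw [this, ih, hinv, zpow_sub_one, MulAut.mul_apply]

lemma cast_mulVec (q : ℕ) {d : ℕ} (M : Matrix (Fin d) (Fin d) ℤ) (v : Fin d → ℤ) :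
    (fun i => ((M.mulVec v i : ℤ) : ZMod q))
      = (M.map (Int.cast : ℤ → ZMod q)).mulVec (fun j => ((v j : ZMod q))) := by
  funext i
  simp only [Matrix.mulVec, dotProduct, Matrix.map_apply]
  push_cast
  rfl

lemma detect (p d k : ℕ) (hp : p.Prime)
    (φ : (Fin d → ℤ) ≃ₗ[ℤ] (Fin d → ℤ))
    (B : Matrix (Fin d) (Fin d) (ZMod (p ^ k)))
    (hφB : ∀ x : Fin d → ℤ, (fun i => ((φ x i : ℤ) : ZMod (p ^ k)))
        = B.mulVec (fun i => ((x i : ZMod (p ^ k)))))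
    (hBr : B ^ (p ^ (k + d * k)) = 1) :
    ∃ (P : Type) (_ : Group P) (_ : Finite P) (F : MapTorus d φ →* P),
      IsPGroup p P ∧ ∀ g : MapTorus d φ,
        ((∃ i, ¬ ((p : ℤ) ^ k ∣ Multiplicative.toAdd g.left i))
          ∨ ¬ ((p : ℤ) ^ k ∣ Multiplicative.toAdd g.right)) → F g ≠ 1 := by
  have hr : p ^ (k + d * k) ≠ 0 := pow_ne_zero _ hp.ne_zero
  haveI : NeZero (p ^ k) := ⟨pow_ne_zero _ hp.ne_zero⟩
  haveI : NeZero (p ^ (k + d * k)) := ⟨hr⟩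
  set r : ℕ := p ^ (k + d * k) with hrdef
  set act := theAct B r hr hBr with hact
  set P := Multiplicative (Fin d → ZMod (p ^ k)) ⋊[act] Multiplicative (ZMod r) with hP
  set f₁ : Multiplicative (Fin d → ℤ) →* Multiplicative (Fin d → ZMod (p ^ k)) :=
    AddMonoidHom.toMultiplicative (redAdd d (p ^ k)) with hf₁
  set f₂ : Multiplicative ℤ →* Multiplicative (ZMod r) :=
    AddMonoidHom.toMultiplicative (Int.castAddHom (ZMod r)) with hf₂
  have hbase : ∀ x, f₁ ((AddEquiv.toMultiplicative φ.toAddEquiv) x)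
      = theAut B r hr hBr (f₁ x) := by
    intro x
    rw [theAut_apply]
    show Multiplicative.ofAdd (fun i => ((φ (Multiplicative.toAdd x) i : ℤ) : ZMod (p ^ k)))
      = Multiplicative.ofAdd (B.mulVec (fun i => (((Multiplicative.toAdd x) i : ZMod (p ^ k)))))
    exact congrArg _ (hφB (Multiplicative.toAdd x))
  have hcompat : ∀ g : Multiplicative ℤ,
      ((SemidirectProduct.inl (φ := act)).comp f₁).comp ((sdAct d φ) g).toMonoidHom
        = (MulAut.conj (((SemidirectProduct.inr (φ := act)).comp f₂) g)).toMonoidHom.comp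
            ((SemidirectProduct.inl (φ := act)).comp f₁) := by
    intro g
    apply MonoidHom.ext
    intro x
    show (SemidirectProduct.inl (φ := act)) (f₁ ((sdAct d φ g) x))
      = MulAut.conj ((SemidirectProduct.inr (φ := act)) (f₂ g))
          ((SemidirectProduct.inl (φ := act)) (f₁ x))
    have hrhs : MulAut.conj (SemidirectProduct.inr (f₂ g))
        (SemidirectProduct.inl (f₁ x) : P) = SemidirectProduct.inl (act (f₂ g) (f₁ x)) := by
      rw [MulAut.conj_apply, ← map_inv, ← SemidirectProduct.inl_aut]
    rw [hrhs]
    congr 1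
    have h1 : (sdAct d φ) g = (AddEquiv.toMultiplicative φ.toAddEquiv) ^ (Multiplicative.toAdd g) :=
      rfl
    have h2 : f₂ g = Multiplicative.ofAdd ((Multiplicative.toAdd g : ℤ) : ZMod r) := rfl
    rw [h1, h2, hact, theAct_intCast]
    exact intertwine_zpow f₁ _ _ hbase (Multiplicative.toAdd g) x
  set F : MapTorus d φ →* P := SemidirectProduct.lift
    ((SemidirectProduct.inl (φ := act)).comp f₁) ((SemidirectProduct.inr (φ := act)).comp f₂)
    hcompat with hF
  have eqv : P ≃ (Multiplicative (Fin d → ZMod (p ^ k)) × Multiplicative (ZMod r)) :=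
    ⟨fun x => (x.left, x.right), fun a => ⟨a.1, a.2⟩, fun _ => rfl, fun _ => rfl⟩
  haveI hfin : Finite P := Finite.of_equiv _ eqv.symm
  have hcard : Nat.card P = p ^ (k * d + (k + d * k)) := by
    rw [Nat.card_congr eqv, Nat.card_prod]
    rw [Nat.card_congr (Multiplicative.toAdd (α := Fin d → ZMod (p ^ k)))]
    rw [Nat.card_congr (Multiplicative.toAdd (α := ZMod r))]
    rw [Nat.card_fun, Nat.card_zmod, Nat.card_zmod, Nat.card_eq_fintype_card, Fintype.card_fin]
    rw [hrdef, ← pow_mul, ← pow_add, mul_comm d k]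
  refine ⟨P, inferInstance, hfin, F, IsPGroup.of_card hcard, ?_⟩
  rintro g hcond hFg
  have hgdecomp : F g = SemidirectProduct.inl (f₁ g.left) * SemidirectProduct.inr (f₂ g.right) := by
    conv_lhs => rw [← SemidirectProduct.inl_left_mul_inr_right g]
    rw [map_mul, hF, SemidirectProduct.lift_inl, SemidirectProduct.lift_inr]
    rfl
  rw [hgdecomp] at hFg
  have hζ : f₂ g.right = 1 := by
    have h1 := congrArg SemidirectProduct.right hFg
    rw [SemidirectProduct.mul_right] at h1
    simpa using h1
  have hw : f₁ g.left = 1 := by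
    rw [hζ, map_one, mul_one] at hFg
    exact SemidirectProduct.inl_injective (by rw [hFg, map_one])
  rcases hcond with ⟨i, hi⟩ | hz
  · apply hi
    have h0 : (fun j => (((Multiplicative.toAdd g.left) j : ℤ) : ZMod (p ^ k))) = 0 := by
      have := congrArg Multiplicative.toAdd hw
      simpa [hf₁, redAdd] using this
    have := congrFun h0 i
    rw [show ((0 : Fin d → ZMod (p ^ k)) i) = 0 from rfl] at this
    have hdvd := (ZMod.intCast_zmod_eq_zero_iff_dvd _ _).mp this
    push_cast at hdvd
    exact hdvd
  · apply hz
    have h0 : ((Multiplicative.toAdd g.right : ℤ) : ZMod r) = 0 := by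
      have := congrArg Multiplicative.toAdd hζ
      simpa [hf₂] using this
    have hdvd := (ZMod.intCast_zmod_eq_zero_iff_dvd _ _).mp h0
    rw [hrdef] at hdvd
    push_cast at hdvd
    exact dvd_trans (pow_dvd_pow _ (by omega)) hdvd

lemma exists_B (p d k : ℕ) (hp : p.Prime)
    (φ : (Fin d → ℤ) ≃ₗ[ℤ] (Fin d → ℤ))
    (ψ : (Fin d → ZMod p) ≃ₗ[ZMod p] (Fin d → ZMod p))
    (hcomm : ∀ x : Fin d → ℤ, ψ (fun i => (x i : ZMod p)) = fun i => ((φ x i : ℤ) : ZMod p))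
    (huni : (ψ.toLinearMap - 1) ^ d = 0) :
    ∃ B : Matrix (Fin d) (Fin d) (ZMod (p ^ k)),
      (∀ x : Fin d → ℤ, (fun i => ((φ x i : ℤ) : ZMod (p ^ k)))
        = B.mulVec (fun i => ((x i : ZMod (p ^ k))))) ∧
      B ^ (p ^ (k + d * k)) = 1 := by
  set M : Matrix (Fin d) (Fin d) ℤ := LinearMap.toMatrixAlgEquiv' (φ.toLinearMap : (Fin d → ℤ) →ₗ[ℤ] (Fin d → ℤ)) with hM
  have happ : ∀ (f : (Fin d → ℤ) →ₗ[ℤ] (Fin d → ℤ)) (x : Fin d → ℤ),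
      f x = (LinearMap.toMatrixAlgEquiv' f).mulVec x := by
    intro f x
    conv_lhs => rw [← Matrix.toLinAlgEquiv'_toMatrixAlgEquiv' f]
    rw [Matrix.toLinAlgEquiv'_apply]
  have hφM : ∀ x : Fin d → ℤ, φ x = M.mulVec x := fun x => happ _ x
  set B : Matrix (Fin d) (Fin d) (ZMod (p ^ k)) := M.map (Int.cast : ℤ → ZMod (p ^ k)) with hB
  have hφB : ∀ x : Fin d → ℤ, (fun i => ((φ x i : ℤ) : ZMod (p ^ k)))
      = B.mulVec (fun i => ((x i : ZMod (p ^ k)))) := by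
    intro x
    have h1 : (fun i => ((φ x i : ℤ) : ZMod (p ^ k)))
        = (fun i => ((M.mulVec x i : ℤ) : ZMod (p ^ k))) := by
      funext i; rw [hφM]
    rw [h1, cast_mulVec]
  set T : (Fin d → ℤ) →ₗ[ℤ] (Fin d → ℤ) := (φ.toLinearMap : (Fin d → ℤ) →ₗ[ℤ] (Fin d → ℤ)) - 1 with hT
  set S : (Fin d → ZMod p) →ₗ[ZMod p] (Fin d → ZMod p) := ψ.toLinearMap - 1 with hS
  have hcast : ∀ (n : ℕ) (x : Fin d → ℤ),
      (fun i => (((T ^ n) x) i : ZMod p)) = (S ^ n) (fun i => ((x i : ZMod p))) := by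
    intro n
    induction n with
    | zero => intro x; simp
    | succ n ih =>
      intro x
      have h1 : (T ^ (n + 1)) x = (T ^ n) (T x) := by
        rw [pow_succ, Module.End.mul_apply]
      have h2 : (fun i => ((T x) i : ZMod p)) = S (fun i => ((x i : ZMod p))) := by
        rw [hS, hT]
        funext i
        simp only [LinearMap.sub_apply, Module.End.one_apply, Pi.sub_apply,
          LinearEquiv.coe_coe]
        rw [hcomm x]
        push_cast
        ring
      rw [h1, ih (T x), h2, pow_succ, Module.End.mul_apply]
  have hTd : ∀ x : Fin d → ℤ, (fun i => (((T ^ d) x) i : ZMod p)) = 0 := by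
    intro x
    rw [hcast d x, huni]
    simp
  set D : Matrix (Fin d) (Fin d) ℤ := LinearMap.toMatrixAlgEquiv' (T ^ d) with hD
  have hDM : D = (M - 1) ^ d := by
    rw [hD, hT, hM, map_pow, map_sub, map_one]
  have hdvd : ∀ i j, (p : ℤ) ∣ D i j := by
    intro i j
    have h1 := congrFun (hTd (Pi.single j 1)) i
    rw [happ (T ^ d) (Pi.single j 1)] at h1
    rw [show LinearMap.toMatrixAlgEquiv' (T ^ d) = D from rfl] at h1
    rw [Matrix.mulVec_single_one] at h1
    simp only [mul_one, Pi.zero_apply] at h1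
    exact (ZMod.intCast_zmod_eq_zero_iff_dvd _ _).mp h1
  set E : Matrix (Fin d) (Fin d) ℤ := Matrix.of (fun i j => D i j / p) with hE
  have hDE : D = (p : ℤ) • E := by
    ext i j
    rw [Matrix.smul_apply, hE]
    exact (Int.mul_ediv_cancel' (hdvd i j)).symm
  set ρ : Matrix (Fin d) (Fin d) ℤ →+* Matrix (Fin d) (Fin d) (ZMod (p ^ k)) :=
    (Int.castRingHom (ZMod (p ^ k))).mapMatrix with hρ
  have hBρ : B = ρ M := rfl
  have hpow : (B - 1) ^ d = (p : ZMod (p ^ k)) • (E.map (Int.cast : ℤ → ZMod (p ^ k))) := by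
    rw [hBρ, ← map_one ρ, ← map_sub, ← map_pow, ← hDM, hDE]
    ext i j
    rw [hρ]
    simp only [RingHom.mapMatrix_apply, Matrix.map_apply, Matrix.smul_apply, smul_eq_mul, Int.coe_castRingHom]
    push_cast
    ring
  exact ⟨B, hφB, matrix_pow_eq_one p hp d k B _ hpow⟩

theorem residually_p_of_reduction_unipotent (p d : ℕ) [Fact p.Prime]
    (φ : (Fin d → ℤ) ≃ₗ[ℤ] (Fin d → ℤ))
    (ψ : (Fin d → ZMod p) ≃ₗ[ZMod p] (Fin d → ZMod p))
    (hcomm : ∀ x : Fin d → ℤ, ψ (fun i => (x i : ZMod p)) = fun i => ((φ x i : ℤ) : ZMod p))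
    (huni : (ψ.toLinearMap - 1) ^ d = 0) :
    ResiduallyP p (MapTorus d φ) := by
  intro g hg
  have hp : p.Prime := Fact.out
  have hnd : ∀ w : ℤ, w ≠ 0 → ∃ k : ℕ, ¬ ((p : ℤ) ^ k ∣ w) := by
    intro w hw
    refine ⟨w.natAbs, fun hdvd => ?_⟩
    have h1 : ((p : ℤ) ^ w.natAbs).natAbs ∣ w.natAbs := Int.natAbs_dvd_natAbs.mpr hdvd
    rw [Int.natAbs_pow, Int.natAbs_natCast] at h1
    have h2 : p ^ w.natAbs ≤ w.natAbs := Nat.le_of_dvd (Int.natAbs_pos.mpr hw) h1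
    have h3 : w.natAbs < 2 ^ w.natAbs := Nat.lt_two_pow_self
    have h4 : 2 ^ w.natAbs ≤ p ^ w.natAbs := Nat.pow_le_pow_left hp.two_le _
    omega
  have hchoice : ∃ k : ℕ, (∃ i, ¬ ((p : ℤ) ^ k ∣ Multiplicative.toAdd g.left i))
      ∨ ¬ ((p : ℤ) ^ k ∣ Multiplicative.toAdd g.right) := by
    by_cases hz : Multiplicative.toAdd g.right = 0
    · have hgl : Multiplicative.toAdd g.left ≠ 0 := by
        intro h0
        apply hg
        ext : 1
        · exact toAdd_eq_zero.mp h0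
        · exact toAdd_eq_zero.mp hz
      obtain ⟨i, hi⟩ := Function.ne_iff.mp hgl
      obtain ⟨k, hk⟩ := hnd _ hi
      exact ⟨k, Or.inl ⟨i, hk⟩⟩
    · obtain ⟨k, hk⟩ := hnd _ hz
      exact ⟨k, Or.inr hk⟩
  obtain ⟨k, hcond⟩ := hchoice
  obtain ⟨B, hφB, hBr⟩ := exists_B p d k hp φ ψ hcomm huni
  obtain ⟨P, hPg, hPf, F, hPp, hdet⟩ := detect p d k hp φ B hφB hBr
  exact ⟨P, hPg, hPf, F, hPp, hdet g hcond⟩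
end

section
/- Let π be a group such that for every prime p, π has a finite-index subgroup that is residually p. Let g ∈ π have infinite order and let m be a positive integer. Then there exists a homomorphism α from π onto a finite group G such that m divides the order of α(g). -/
/-- Key step: for a single prime power `p ^ k`, there is a finite quotient of `π`
in which the image of `g` has order divisible by `p ^ k`. -/
lemma exists_finite_quotient_prime_pow {π : Type*} [Group π] {p : ℕ} (hp : p.Prime)
    {H : Subgroup π} (hH : H.FiniteIndex) (hres : ResiduallyP p H)
    {g : π} (hg : ¬IsOfFinOrder g) (k : ℕ) :
    ∃ (G : Type) (_ : Group G) (_ : Finite G) (α : π →* G), p ^ k ∣ orderOf (α g) := by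
  haveI : Fact p.Prime := ⟨hp⟩
  obtain ⟨n, hn0, -, hnH⟩ := Subgroup.exists_pow_mem_of_index_ne_zero hH.index_ne_zero g
  set h : H := ⟨g ^ n, hnH⟩ with hh
  have hhne : h ^ p ^ (k - 1) ≠ 1 := by
    intro hc
    apply hg
    have : g ^ (n * p ^ (k - 1)) = 1 := by
      have := congrArg (Subtype.val) hc
      simpa [hh, pow_mul] using this
    exact isOfFinOrder_iff_pow_eq_one.mpr
      ⟨n * p ^ (k - 1), Nat.mul_pos hn0 (pow_pos hp.pos _), this⟩
  obtain ⟨P, _, _, f, hP, hfne⟩ := hres _ hhne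
  obtain ⟨j, hj⟩ := (IsPGroup.iff_orderOf.mp hP) (f h)
  have hpk : p ^ k ∣ orderOf (f h) := by
    rw [hj]
    apply pow_dvd_pow
    by_contra hlt
    push_neg at hlt
    apply hfne
    rw [map_pow]
    apply orderOf_dvd_iff_pow_eq_one.mp
    rw [hj]
    exact pow_dvd_pow p (by omega)
  -- push the kernel into `π` and quotient by its normal core
  set K : Subgroup π := f.ker.map H.subtype with hK
  haveI : K.FiniteIndex := by
    constructor
    rw [Subgroup.index_map_subtype]
    exact Nat.mul_ne_zero (Subgroup.FiniteIndex.index_ne_zero) hH.index_ne_zero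
  obtain ⟨G', instG', instF', ⟨eqv⟩⟩ :=
    Finite.exists_type_univ_nonempty_mulEquiv.{_, 0} (π ⧸ K.normalCore)
  refine ⟨G', instG', inferInstance,
    eqv.toMonoidHom.comp (QuotientGroup.mk' K.normalCore), ?_⟩
  have horder : ∀ x : π, orderOf ((eqv.toMonoidHom.comp (QuotientGroup.mk' K.normalCore)) x)
      = orderOf (QuotientGroup.mk' K.normalCore x) := fun x =>
    orderOf_injective eqv.toMonoidHom eqv.injective _
  rw [horder]
  set α := QuotientGroup.mk' K.normalCore with hα
  have h1 : orderOf (f h) ∣ orderOf (α (h : π)) := by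
    apply orderOf_dvd_of_pow_eq_one
    have hmem : (h : π) ^ orderOf (α (h : π)) ∈ K.normalCore := by
      rw [← QuotientGroup.eq_one_iff]
      have : α ((h : π) ^ orderOf (α (h : π))) = 1 := by
        rw [map_pow]; exact pow_orderOf_eq_one _
      exact this
    have hmemK : (h : π) ^ orderOf (α (h : π)) ∈ K := K.normalCore_le hmem
    obtain ⟨x, hx, hxe⟩ := hmemK
    have : x = h ^ orderOf (α (h : π)) := by
      apply H.subtype_injective
      simpa using hxe
    rw [this] at hx
    have := (f.mem_ker).mp hx
    rwa [map_pow] at this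
  have h2 : orderOf (α (h : π)) ∣ orderOf (α g) := by
    have : α (h : π) = (α g) ^ n := by rw [hh]; simp [map_pow]
    rw [this]
    exact orderOf_pow_dvd n
  exact hpk.trans (h1.trans h2)

theorem exists_finite_quotient_with_order_divisible (π : Type*) [Group π]
    (hvirt : ∀ p : ℕ, p.Prime → ∃ H : Subgroup π, H.FiniteIndex ∧ ResiduallyP p H)
    (g : π) (hg : ¬IsOfFinOrder g) (m : ℕ) (hm : 0 < m) :
    ∃ (G : Type) (_ : Group G) (_ : Finite G) (α : π →* G),
      Function.Surjective α ∧ m ∣ orderOf (α g) := by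
  classical
  set S := m.primeFactors with hS
  have key : ∀ p : S, ∃ (G : Type) (_ : Group G) (_ : Finite G) (α : π →* G),
      (p : ℕ) ^ (m.factorization p) ∣ orderOf (α g) := by
    rintro ⟨p, hp⟩
    have hpp : p.Prime := Nat.prime_of_mem_primeFactors hp
    obtain ⟨H, hHfi, hHres⟩ := hvirt p hpp
    exact exists_finite_quotient_prime_pow hpp hHfi hHres hg _
  choose G instG instF α hα using key
  set β : π →* ∀ p : S, G p := Pi.monoidHom α with hβ
  have hNpos : 0 < orderOf (β g) := orderOf_pos _
  have hdvd : m ∣ orderOf (β g) := by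
    rw [← Nat.factorization_le_iff_dvd hm.ne' hNpos.ne']
    intro p
    by_cases hp : p ∈ S
    · have hpp : p.Prime := Nat.prime_of_mem_primeFactors hp
      have h1 : orderOf (α ⟨p, hp⟩ g) ∣ orderOf (β g) := by
        apply orderOf_dvd_of_pow_eq_one
        have := pow_orderOf_eq_one (β g)
        have := congrFun this ⟨p, hp⟩
        simpa [hβ, Pi.monoidHom] using this
      have h2 : p ^ (m.factorization p) ∣ orderOf (β g) := (hα ⟨p, hp⟩).trans h1
      exact (Nat.Prime.pow_dvd_iff_le_factorization hpp hNpos.ne').mp h2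
    · have hp' : p ∉ m.primeFactors := hp
      rw [Nat.mem_primeFactors] at hp'
      have : m.factorization p = 0 := by
        rw [Nat.factorization_eq_zero_iff]
        tauto
      simp [this]
  refine ⟨β.range, inferInstance, inferInstance, β.rangeRestrict,
    β.rangeRestrict_surjective, ?_⟩
  have : orderOf (β.rangeRestrict g) = orderOf (β g) :=
    (orderOf_injective β.range.subtype Subtype.coe_injective _).symm
  rwa [this]
end

section
/- Let φ : G → H be a group homomorphism such that for every normal subgroup H̃ of H with H/H̃ finite solvable, the induced map on abelianizations H₁(φ⁻¹(H̃); ℤ) → H₁(H̃; ℤ) is an isomorphism. Suppose moreover that φ is surjective and G is residually finite solvable. Then φ is an isomorphism. -/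
/-- A group is residually finite solvable if every nontrivial element is detected by a
homomorphism to a finite solvable group. -/
def ResiduallyFiniteSolvable (G : Type*) [Group G] : Prop :=
  ∀ g : G, g ≠ 1 → ∃ (S : Type) (_ : Group S) (_ : Finite S) (f : G →* S),
    IsSolvable S ∧ f g ≠ 1

theorem bijective_of_solvable_covers (G H : Type*) [Group G] [Group H] (φ : G →* H)
    (hab : ∀ H' : Subgroup H, ∀ _ : H'.Normal, Finite (H ⧸ H') → IsSolvable (H ⧸ H') →
      Function.Bijective (Abelianization.map (φ.subgroupComap H')))
    (hsurj : Function.Surjective φ) (hres : ResiduallyFiniteSolvable G) :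
    Function.Bijective φ := by
  refine ⟨(injective_iff_map_eq_one φ).mpr fun g hg => ?_, hsurj⟩
  by_contra hg1
  obtain ⟨S, _, _, f, hS, hfg⟩ := hres g hg1
  have key : ∀ n, φ.ker ≤ (derivedSeries S n).comap f := by
    intro n
    induction n with
    | zero => simp [derivedSeries_zero]
    | succ n ih =>
      set Dn := derivedSeries S n with hDn
      set Gn := Dn.comap f with hGnd
      set Hn := Gn.map φ with hHnd
      haveI hDnNorm : Dn.Normal := derivedSeries_normal S n
      have hGnNorm : Gn.Normal := Subgroup.Normal.comap hDnNorm f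
      have hHnNorm : Hn.Normal := Subgroup.Normal.map hGnNorm φ hsurj
      have hG' : Subgroup.comap φ Hn = Gn := by
        rw [hHnd, Subgroup.comap_map_eq, sup_eq_left]
        exact ih
      -- G ⧸ Gn is finite and solvable
      have hkerπ : ((QuotientGroup.mk' Dn).comp f).ker = Gn := by
        rw [← MonoidHom.comap_ker, QuotientGroup.ker_mk']
      haveI : Finite (G ⧸ Gn) := by
        have e1 : G ⧸ Gn ≃* ((QuotientGroup.mk' Dn).comp f).range :=
          (QuotientGroup.quotientMulEquivOfEq hkerπ.symm).trans
            (QuotientGroup.quotientKerEquivRange _)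
        exact Finite.of_equiv _ e1.toEquiv.symm
      haveI : IsSolvable (G ⧸ Gn) := by
        have e1 : G ⧸ Gn ≃* ((QuotientGroup.mk' Dn).comp f).range :=
          (QuotientGroup.quotientMulEquivOfEq hkerπ.symm).trans
            (QuotientGroup.quotientKerEquivRange _)
        haveI : Group.IsSolvable S := hS
        exact solvable_of_solvable_injective (f := e1.toMonoidHom) e1.injective
      -- H ⧸ Hn ≃ G ⧸ Gn
      have hρ : Function.Surjective ((QuotientGroup.mk' Hn).comp φ) :=
        (QuotientGroup.mk'_surjective Hn).comp hsurj
      have hkerρ : ((QuotientGroup.mk' Hn).comp φ).ker = Gn := by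
        rw [← MonoidHom.comap_ker, QuotientGroup.ker_mk', hG']
      have e2 : G ⧸ Gn ≃* H ⧸ Hn :=
        (QuotientGroup.quotientMulEquivOfEq hkerρ.symm).trans
          (QuotientGroup.quotientKerEquivOfSurjective _ hρ)
      haveI hfin : Finite (H ⧸ Hn) := Finite.of_equiv _ e2.toEquiv
      haveI hsol : IsSolvable (H ⧸ Hn) := by
        haveI : Group.IsSolvable (G ⧸ Gn) := this
        exact solvable_of_solvable_injective (f := e2.symm.toMonoidHom) e2.symm.injective
      have hbij := hab Hn hHnNorm hfin hsol
      intro k hk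
      have hkG' : k ∈ Subgroup.comap φ Hn := by rw [hG']; exact ih hk
      set k' : ↥(Subgroup.comap φ Hn) := ⟨k, hkG'⟩ with hk'
      have h1 : (φ.subgroupComap Hn) k' = 1 := Subtype.ext hk
      have h2 : Abelianization.of k' = 1 := by
        apply hbij.1
        rw [Abelianization.map_of, h1, map_one, map_one]
      have h3 : k' ∈ commutator ↥(Subgroup.comap φ Hn) := by
        rwa [← QuotientGroup.eq_one_iff]
      have h4 : k ∈ ⁅Subgroup.comap φ Hn, Subgroup.comap φ Hn⁆ := by
        have : k ∈ Subgroup.map (Subgroup.comap φ Hn).subtype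
            (commutator ↥(Subgroup.comap φ Hn)) := ⟨k', h3, rfl⟩
        have hmap : Subgroup.map (Subgroup.comap φ Hn).subtype ⊤ = Subgroup.comap φ Hn := by
          rw [← MonoidHom.range_eq_map, Subgroup.range_subtype]
        rwa [commutator_def, Subgroup.map_commutator, hmap] at this
      show f k ∈ derivedSeries S (n + 1)
      have hle : Subgroup.map f ⁅Subgroup.comap φ Hn, Subgroup.comap φ Hn⁆ ≤
          derivedSeries S (n + 1) := by
        rw [Subgroup.map_commutator, derivedSeries_succ]
        have hm : Subgroup.map f (Subgroup.comap φ Hn) ≤ Dn := by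
          rw [hG']; exact Subgroup.map_comap_le f Dn
        exact Subgroup.commutator_mono hm hm
      exact hle ⟨k, h4, rfl⟩
  obtain ⟨n, hn⟩ := hS.solvable
  have hgmem : g ∈ (derivedSeries S n).comap f := key n hg
  rw [hn] at hgmem
  exact hfg hgmem
end
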